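/- For every n ≥ 2, there exists a triangulated n-sphere with 2n + 4 vertices and exactly (n+1)(n+2) facets admitting a simplicial degree n+1 map to S^n_{n+2}. -/

import Mathlib

open Finset

/-- An abstract simplicial complex on vertex type `V`: a collection of nonempty
finite sets of vertices closed under taking nonempty subsets. -/
structure AbsCx (V : Type*) where
  faces : Set (Finset V)
  down_closed : ∀ ⦃s t : Finset V⦄, s ∈ faces → t ⊆ s → t.Nonempty → t ∈ faces
  nonempty_of_mem : ∀ ⦃s⦄, s ∈ faces → s.Nonempty

namespace AbsCx

variable {V W : Type*}

/-- The vertices of a complex. -/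
def vertexSet (K : AbsCx V) : Set V := {v | {v} ∈ K.faces}

/-- The `n`-dimensional faces (given by `n+1` vertices). -/
def facetsOfDim (K : AbsCx V) (n : ℕ) : Set (Finset V) :=
  {s | s ∈ K.faces ∧ s.card = n + 1}

/-- A simplicial map sends faces to faces. -/
def IsSimplicialMap [DecidableEq W] (K : AbsCx V) (L : AbsCx W) (f : V → W) : Prop :=
  ∀ s ∈ K.faces, s.image f ∈ L.faces

/-- Geometric realization of an abstract simplicial complex, as a subspace of `V → ℝ`. -/
def realization (K : AbsCx V) : Set (V → ℝ) :=
  {g | (∀ v, 0 ≤ g v) ∧ ∃ s ∈ K.faces, (∀ v, v ∉ s → g v = 0) ∧ ∑ v ∈ s, g v = 1}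

/-- `K` is a triangulation of the `n`-sphere. -/
def IsSphereTriangulation (n : ℕ) (K : AbsCx V) : Prop :=
  Nonempty (K.realization ≃ₜ Metric.sphere (0 : EuclideanSpace ℝ (Fin (n+1))) 1)

/-- `K` is a triangulation of the closed `n`-disc. -/
def IsDiscTriangulation (n : ℕ) (K : AbsCx V) : Prop :=
  Nonempty (K.realization ≃ₜ Metric.closedBall (0 : EuclideanSpace ℝ (Fin n)) 1)

/-- `K` triangulates a closed (compact, boundaryless = locally Euclidean) topological
`n`-manifold. -/
def IsClosedManifoldTriangulation (n : ℕ) (K : AbsCx V) : Prop :=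
  ∃ (M : Type) (ts : TopologicalSpace M),
    @CompactSpace M ts ∧ Nonempty (@ChartedSpace (EuclideanSpace ℝ (Fin n)) _ M ts) ∧
      Nonempty (@Homeomorph (K.realization) M _ ts)

/-- A coherent orientation of the `n`-dimensional faces of `K`: a sign function on
ordered `(n+1)`-tuples of vertices, alternating under permutations, equal to `±1`
exactly on the orderings of `n`-faces, and such that two facets sharing an
`(n-1)`-face (i.e. orderings differing in exactly one coordinate) get opposite signs. -/
structure CoherentOrientation [DecidableEq V] (n : ℕ) (K : AbsCx V) where
  sign : (Fin (n+1) → V) → ℤ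
  sign_perm : ∀ (x : Fin (n+1) → V) (σ : Equiv.Perm (Fin (n+1))),
    sign (x ∘ σ) = (Equiv.Perm.sign σ : ℤ) * sign x
  sign_unit : ∀ x : Fin (n+1) → V, Function.Injective x →
    Finset.image x Finset.univ ∈ K.faces → sign x = 1 ∨ sign x = -1
  sign_zero : ∀ x : Fin (n+1) → V,
    ¬ Function.Injective x ∨ Finset.image x Finset.univ ∉ K.faces → sign x = 0
  coherent : ∀ x y : Fin (n+1) → V,
    (∃ i, x i ≠ y i ∧ ∀ j, j ≠ i → x j = y j) →
    sign x ≠ 0 → sign y ≠ 0 → sign y = - sign x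

open scoped Classical in
/-- The algebraic number of preimages of the ordered simplex `y` under `f`. -/
noncomputable def algSum [Fintype V] {n : ℕ}
    (sgn : (Fin (n+1) → V) → ℤ) (f : V → W) (y : Fin (n+1) → W) : ℤ :=
  ∑ x : Fin (n+1) → V, if f ∘ x = y then sgn x else 0

/-- `f` has degree `d`: the algebraic number of preimages of every positively
oriented facet of the target equals `d`. -/
def HasDegree [Fintype V] [DecidableEq V] [DecidableEq W] {n : ℕ}
    {K : AbsCx V} {L : AbsCx W}
    (oK : CoherentOrientation n K) (oL : CoherentOrientation n L)
    (f : V → W) (d : ℤ) : Prop :=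
  ∀ y : Fin (n+1) → W, oL.sign y = 1 → algSum oK.sign f y = d

/-- The standard `n`-sphere `S^n_{n+2}`: the boundary complex of the `(n+1)`-simplex,
i.e. all proper nonempty subsets of `n+2` vertices. -/
def stdSphere (n : ℕ) : AbsCx (Fin (n+2)) where
  faces := {s | s.Nonempty ∧ s ≠ Finset.univ}
  down_closed := fun {s t} hs hts ht =>
    ⟨ht, fun h => hs.2 (Finset.univ_subset_iff.mp (h ▸ hts))⟩
  nonempty_of_mem := fun {s} hs => hs.1

/-- Boundary edges of a 2-dimensional complex: edges lying in exactly one triangle. -/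
def boundaryEdges (K : AbsCx V) : Set (Finset V) :=
  {e | e ∈ K.faces ∧ e.card = 2 ∧ Set.ncard {s | s ∈ K.faces ∧ s.card = 3 ∧ e ⊆ s} = 1}

end AbsCx

open AbsCx



open Finset AbsCx

namespace Stmt11Aux

variable {V : Type*} [Fintype V] [DecidableEq V]

/-- The simplicial complex generated by a family of facets. -/
def gen (F : Finset (Finset V)) : AbsCx V where
  faces := {s | s.Nonempty ∧ ∃ T ∈ F, s ⊆ T}
  down_closed := by
    rintro s t ⟨hs, T, hT, hsT⟩ hts htne
    exact ⟨htne, T, hT, hts.trans hsT⟩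
  nonempty_of_mem := fun {s} h => h.1

lemma mem_gen_faces {F : Finset (Finset V)} {s : Finset V} :
    s ∈ (gen F).faces ↔ s.Nonempty ∧ ∃ T ∈ F, s ⊆ T := Iff.rfl

lemma mem_real_gen {F : Finset (Finset V)} (hne : ∀ T ∈ F, T.Nonempty) {g : V → ℝ} :
    g ∈ (gen F).realization ↔
      (∀ v, 0 ≤ g v) ∧ ∃ T ∈ F, (∀ v ∉ T, g v = 0) ∧ ∑ v ∈ T, g v = 1 := by
  constructor
  · rintro ⟨h0, s, ⟨hsne, T, hT, hsT⟩, hz, hsum⟩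
    refine ⟨h0, T, hT, fun v hv => hz v fun hvs => hv (hsT hvs), ?_⟩
    calc ∑ v ∈ T, g v = ∑ v ∈ s, g v := (Finset.sum_subset hsT fun v _ hv => hz v hv).symm
      _ = 1 := hsum
  · rintro ⟨h0, T, hT, hz, hsum⟩
    exact ⟨h0, T, ⟨hne T hT, T, hT, subset_rfl⟩, hz, hsum⟩

lemma isCompact_simplexSet (T : Finset V) :
    IsCompact {g : V → ℝ | (∀ v, 0 ≤ g v) ∧ (∀ v ∉ T, g v = 0) ∧ ∑ v ∈ T, g v = 1} := by
  refine IsCompact.of_isClosed_subset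
    (isCompact_univ_pi fun _ => isCompact_Icc (a := (0:ℝ)) (b := 1)) ?_ ?_
  · have h1 : IsClosed {g : V → ℝ | ∀ v, 0 ≤ g v} := by
      have : {g : V → ℝ | ∀ v, 0 ≤ g v} = ⋂ v, {g : V → ℝ | 0 ≤ g v} := by ext; simp
      rw [this]
      exact isClosed_iInter fun v => isClosed_le continuous_const (continuous_apply v)
    have h2 : IsClosed {g : V → ℝ | ∀ v ∉ T, g v = 0} := by
      have : {g : V → ℝ | ∀ v ∉ T, g v = 0} =
          ⋂ (v) (_ : v ∉ T), {g : V → ℝ | g v = 0} := by ext; simp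
      rw [this]
      exact isClosed_iInter fun v => isClosed_iInter fun _ =>
        isClosed_eq (continuous_apply v) continuous_const
    have h3 : IsClosed {g : V → ℝ | ∑ v ∈ T, g v = 1} :=
      isClosed_eq (continuous_finset_sum _ fun v _ => continuous_apply v) continuous_const
    have : {g : V → ℝ | (∀ v, 0 ≤ g v) ∧ (∀ v ∉ T, g v = 0) ∧ ∑ v ∈ T, g v = 1} =
        {g : V → ℝ | ∀ v, 0 ≤ g v} ∩ ({g : V → ℝ | ∀ v ∉ T, g v = 0} ∩
          {g : V → ℝ | ∑ v ∈ T, g v = 1}) := by ext; simp [and_assoc]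
    rw [this]
    exact h1.inter (h2.inter h3)
  · rintro g ⟨h0, hz, hsum⟩
    rw [Set.mem_univ_pi]
    intro v
    refine ⟨h0 v, ?_⟩
    by_cases hv : v ∈ T
    · calc g v ≤ ∑ u ∈ T, g u := Finset.single_le_sum (fun i _ => h0 i) hv
        _ = 1 := hsum
    · simp [hz v hv]

lemma isCompact_real_gen (F : Finset (Finset V)) (hne : ∀ T ∈ F, T.Nonempty) :
    IsCompact ((gen F).realization) := by
  have heq : (gen F).realization = ⋃ T ∈ F,
      {g : V → ℝ | (∀ v, 0 ≤ g v) ∧ (∀ v ∉ T, g v = 0) ∧ ∑ v ∈ T, g v = 1} := by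
    ext g
    simp only [mem_real_gen hne, Set.mem_iUnion, Set.mem_setOf_eq, exists_prop]
    constructor
    · rintro ⟨h0, T, hT, h⟩; exact ⟨T, hT, h0, h⟩
    · rintro ⟨T, hT, h0, h⟩; exact ⟨h0, T, hT, h⟩
  rw [heq]
  exact Finset.isCompact_biUnion F fun T _ => isCompact_simplexSet T

/-- Facet family after stacking the facet `S` with new vertex `w`. -/
def stackFam (F : Finset (Finset V)) (S : Finset V) (w : V) : Finset (Finset V) :=
  (F.erase S) ∪ S.image (fun u => insert w (S.erase u))

lemma mem_stackFam {F : Finset (Finset V)} {S : Finset V} {w : V} {T : Finset V} :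
    T ∈ stackFam F S w ↔ (T ∈ F ∧ T ≠ S) ∨ ∃ u ∈ S, T = insert w (S.erase u) := by
  simp only [stackFam, Finset.mem_union, Finset.mem_erase, Finset.mem_image]
  constructor
  · rintro (⟨h1, h2⟩ | ⟨u, hu, rfl⟩)
    · exact Or.inl ⟨h2, h1⟩
    · exact Or.inr ⟨u, hu, rfl⟩
  · rintro (⟨h1, h2⟩ | ⟨u, hu, rfl⟩)
    · exact Or.inl ⟨h2, h1⟩
    · exact Or.inr ⟨u, hu, rfl⟩

noncomputable def stackMap (S : Finset V) (w : V) (g : V → ℝ) : V → ℝ :=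
  fun v => if v = w then 0 else g v + (if v ∈ S then g w / S.card else 0)

noncomputable def unstackMap (S : Finset V) (w : V) (hS : S.Nonempty) (p : V → ℝ) : V → ℝ :=
  fun v => if v = w then S.card * S.inf' hS p
    else if v ∈ S then p v - S.inf' hS p else p v

end Stmt11Aux


open Finset AbsCx

namespace Stmt11Aux

variable {V : Type*} [Fintype V] [DecidableEq V]

theorem stack_homeo {F : Finset (Finset V)} {S : Finset V} {w : V}
    (hS : S ∈ F) (hcard : ∀ T ∈ F, T.card = S.card) (hSne : S.Nonempty)
    (hw : ∀ T ∈ F, w ∉ T) :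
    Nonempty (((gen (stackFam F S w)).realization) ≃ₜ ((gen F).realization)) := by
  classical
  have hwS : w ∉ S := hw S hS
  have hSmax : ∀ T ∈ F, S ⊆ T → T = S := fun T hT hsub =>
    (Finset.eq_of_subset_of_card_le hsub (le_of_eq (hcard T hT))).symm
  have hcardpos : 0 < (S.card : ℝ) := by
    exact_mod_cast Finset.card_pos.mpr hSne
  have hneF : ∀ T ∈ F, T.Nonempty := fun T hT =>
    Finset.card_pos.mp (by rw [hcard T hT]; exact Finset.card_pos.mpr hSne)
  have hne' : ∀ T ∈ stackFam F S w, T.Nonempty := by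
    intro T hT
    rcases mem_stackFam.mp hT with ⟨h1, _⟩ | ⟨u, _, rfl⟩
    · exact hneF T h1
    · exact Finset.insert_nonempty _ _
  -- the minimum over S of a realization point of `gen F'` is 0
  have hminzero : ∀ g ∈ (gen (stackFam F S w)).realization, ∃ u ∈ S, g u = 0 := by
    intro g hg
    rw [mem_real_gen hne'] at hg
    obtain ⟨h0, T, hT, hzero, hsum⟩ := hg
    rcases mem_stackFam.mp hT with ⟨h1, h2⟩ | ⟨u, hu, rfl⟩
    · have : ¬ S ⊆ T := fun hsub => h2 (hSmax T h1 hsub)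
      obtain ⟨u, huS, huT⟩ := Finset.not_subset.mp this
      exact ⟨u, huS, hzero u huT⟩
    · refine ⟨u, hu, hzero u ?_⟩
      intro hmem
      rcases Finset.mem_insert.mp hmem with h | h
      · exact hwS (h ▸ hu)
      · exact (Finset.mem_erase.mp h).1 rfl
  -- forward map lands in realization of gen F
  have hψmem : ∀ g ∈ (gen (stackFam F S w)).realization,
      stackMap S w g ∈ (gen F).realization := by
    intro g hg
    have hg' := (mem_real_gen hne').mp hg
    obtain ⟨h0, T, hT, hzero, hsum⟩ := hg'
    rw [mem_real_gen hneF]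
    constructor
    · intro v
      unfold stackMap
      by_cases hvw : v = w
      · simp [hvw]
      · rw [if_neg hvw]
        have : (0:ℝ) ≤ (if v ∈ S then g w / S.card else 0) := by
          split
          · exact div_nonneg (h0 w) hcardpos.le
          · exact le_refl 0
        exact add_nonneg (h0 v) this
    · rcases mem_stackFam.mp hT with ⟨h1, _⟩ | ⟨u, huS, rfl⟩
      · have hgw : g w = 0 := hzero w (hw T h1)
        have hid : stackMap S w g = g := by
          funext v
          unfold stackMap
          by_cases hvw : v = w
          · simp [hvw, hgw]
          · simp [hvw, hgw]
        rw [hid]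
        exact ⟨T, h1, hzero, hsum⟩
      · have hgu : g u = 0 := by
          refine hzero u ?_
          simp only [Finset.mem_insert, Finset.mem_erase]
          push_neg
          exact ⟨fun h => hwS (by rw [← h]; exact huS), fun h => absurd rfl h⟩
        have hwnotin : w ∉ S.erase u := fun h => hwS (Finset.mem_of_mem_erase h)
        have hsum1 : g w + ∑ v ∈ S.erase u, g v = 1 := by
          rw [← Finset.sum_insert hwnotin]; exact hsum
        have hsumS : ∑ v ∈ S, g v = 1 - g w := by
          have h2 : ∑ v ∈ S.erase u, g v + g u = ∑ v ∈ S, g v :=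
            Finset.sum_erase_add _ _ huS
          rw [← h2, hgu, add_zero]
          linarith
      -- now conclude with facet S
        refine ⟨S, hS, ?_, ?_⟩
        · intro v hvS
          unfold stackMap
          by_cases hvw : v = w
          · simp [hvw]
          · rw [if_neg hvw, if_neg hvS, add_zero]
            refine hzero v ?_
            intro hmem
            rcases Finset.mem_insert.mp hmem with h | h
            · exact hvw h
            · exact hvS (Finset.mem_of_mem_erase h)
        · have : ∀ v ∈ S, stackMap S w g v = g v + g w / S.card := by
            intro v hvS
            unfold stackMap
            rw [if_neg (fun h => hwS (by rw [← h]; exact hvS)), if_pos hvS]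
          rw [Finset.sum_congr rfl this, Finset.sum_add_distrib, Finset.sum_const, hsumS]
          rw [nsmul_eq_mul]
          field_simp
          ring
  -- inverse map lands in realization of gen F'
  have hφmem : ∀ p ∈ (gen F).realization,
      unstackMap S w hSne p ∈ (gen (stackFam F S w)).realization := by
    intro p hp
    have hp' := (mem_real_gen hneF).mp hp
    obtain ⟨h0, T, hT, hzero, hsum⟩ := hp'
    have hpw : p w = 0 := hzero w (hw T hT)
    have hm0 : 0 ≤ S.inf' hSne p := Finset.le_inf' _ _ fun b _ => h0 b
    rw [mem_real_gen hne']
    constructor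
    · intro v
      unfold unstackMap
      split
      · have : (0:ℝ) ≤ (S.card : ℝ) := Nat.cast_nonneg _
        exact mul_nonneg this hm0
      · split
        · rename_i hvS
          have hle : S.inf' hSne p ≤ p v := Finset.inf'_le p hvS
          linarith
        · exact h0 v
    · by_cases hTS : T = S
      · rw [hTS] at hzero hsum
        obtain ⟨u, huS, hum⟩ := Finset.exists_mem_eq_inf' hSne p
        have hwnotin : w ∉ S.erase u := fun h => hwS (Finset.mem_of_mem_erase h)
        refine ⟨insert w (S.erase u),
          mem_stackFam.mpr (Or.inr ⟨u, huS, rfl⟩), ?_, ?_⟩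
        · intro v hv
          have hvw : v ≠ w := fun h => hv (by rw [h]; exact Finset.mem_insert_self w _)
          unfold unstackMap
          rw [if_neg hvw]
          by_cases hvS : v ∈ S
          · have hvu : v = u := by
              by_contra hne
              exact hv (Finset.mem_insert_of_mem (Finset.mem_erase.mpr ⟨hne, hvS⟩))
            rw [if_pos hvS, hvu, ← hum]
            ring
          · rw [if_neg hvS]
            exact hzero v hvS
        · rw [Finset.sum_insert hwnotin]
          have hterm : ∀ v ∈ S.erase u, unstackMap S w hSne p v = p v - S.inf' hSne p := by
            intro v hv
            have hvS : v ∈ S := Finset.mem_of_mem_erase hv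
            have hvw : v ≠ w := fun h => hwS (by rw [← h]; exact hvS)
            unfold unstackMap
            rw [if_neg hvw, if_pos hvS]
          have hwv : unstackMap S w hSne p w = S.card * S.inf' hSne p := by
            unfold unstackMap
            rw [if_pos rfl]
          rw [hwv, Finset.sum_congr rfl hterm, Finset.sum_sub_distrib, Finset.sum_const]
          have hsum' : ∑ v ∈ S.erase u, p v = 1 - S.inf' hSne p := by
            have h2 : ∑ v ∈ S.erase u, p v + p u = ∑ v ∈ S, p v :=
              Finset.sum_erase_add _ _ huS
            rw [hsum] at h2
            rw [← hum] at h2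
            linarith
          rw [hsum', Finset.card_erase_of_mem huS, nsmul_eq_mul]
          have h1le : (1:ℕ) ≤ S.card := Finset.card_pos.mpr ⟨u, huS⟩
          have hc : ((S.card - 1 : ℕ) : ℝ) = (S.card : ℝ) - 1 := by
            push_cast [Nat.cast_sub h1le]
            ring
          rw [hc]
          ring
      · have hnotsub : ¬ S ⊆ T := fun hsub => hTS (hSmax T hT hsub)
        obtain ⟨u, huS, huT⟩ := Finset.not_subset.mp hnotsub
        have hpu : p u = 0 := hzero u huT
        have hm' : S.inf' hSne p = 0 :=
          le_antisymm (by rw [← hpu]; exact Finset.inf'_le _ huS) hm0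
        have hid : unstackMap S w hSne p = p := by
          funext v
          unfold unstackMap
          split
          · rename_i hvw
            rw [hm', hvw, hpw]
            ring
          · split
            · rw [hm']; ring
            · rfl
        rw [hid]
        exact ⟨T, mem_stackFam.mpr (Or.inl ⟨hT, hTS⟩), hzero, hsum⟩
  -- left inverse
  have hleft : ∀ g ∈ (gen (stackFam F S w)).realization,
      unstackMap S w hSne (stackMap S w g) = g := by
    intro g hg
    obtain ⟨u, huS, hgu⟩ := hminzero g hg
    have h0 : ∀ v, 0 ≤ g v := ((mem_real_gen hne').mp hg).1
    have hinf : S.inf' hSne (stackMap S w g) = g w / S.card := by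
      apply le_antisymm
      · have : stackMap S w g u = g w / S.card := by
          unfold stackMap
          rw [if_neg (fun h => hwS (by rw [← h]; exact huS)), if_pos huS, hgu, zero_add]
        rw [← this]
        exact Finset.inf'_le _ huS
      · apply Finset.le_inf'
        intro b hbS
        unfold stackMap
        rw [if_neg (fun h => hwS (by rw [← h]; exact hbS)), if_pos hbS]
        have := h0 b
        linarith
    funext v
    unfold unstackMap
    rw [hinf]
    by_cases hvw : v = w
    · rw [if_pos hvw, hvw]
      field_simp
    · rw [if_neg hvw]
      by_cases hvS : v ∈ S
      · rw [if_pos hvS]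
        unfold stackMap
        rw [if_neg hvw, if_pos hvS]
        ring
      · rw [if_neg hvS]
        unfold stackMap
        rw [if_neg hvw, if_neg hvS, add_zero]
  -- right inverse
  have hright : ∀ p ∈ (gen F).realization,
      stackMap S w (unstackMap S w hSne p) = p := by
    intro p hp
    obtain ⟨h0, T, hT, hzero, hsum⟩ := (mem_real_gen hneF).mp hp
    have hpw : p w = 0 := hzero w (hw T hT)
    funext v
    unfold stackMap unstackMap
    by_cases hvw : v = w
    · rw [if_pos hvw, hvw, hpw]
    · rw [if_neg hvw]
      by_cases hvS : v ∈ S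
      · rw [if_neg hvw, if_pos hvS, if_pos hvS, if_pos rfl]
        field_simp
        ring
      · rw [if_neg hvw, if_neg hvS, if_neg hvS, add_zero]
  -- build the equivalence
  let E : ((gen (stackFam F S w)).realization) ≃ ((gen F).realization) :=
    { toFun := fun g => ⟨stackMap S w g.1, hψmem g.1 g.2⟩
      invFun := fun p => ⟨unstackMap S w hSne p.1, hφmem p.1 p.2⟩
      left_inv := fun g => Subtype.ext (hleft g.1 g.2)
      right_inv := fun p => Subtype.ext (hright p.1 p.2) }
  have hcont : Continuous E := by
    refine Continuous.subtype_mk ?_ _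
    have hc : Continuous (stackMap S w) := by
      apply continuous_pi
      intro v
      unfold stackMap
      by_cases hvw : v = w
      · simp only [if_pos hvw]
        exact continuous_const
      · simp only [if_neg hvw]
        by_cases hvS : v ∈ S
        · simp only [if_pos hvS]
          exact (continuous_apply v).add ((continuous_apply w).div_const _)
        · simp only [if_neg hvS, add_zero]
          exact continuous_apply v
    exact hc.comp continuous_subtype_val
  haveI : CompactSpace ((gen (stackFam F S w)).realization) :=
    isCompact_iff_compactSpace.mp (isCompact_real_gen _ hne')
  exact ⟨Continuous.homeoOfEquivCompactToT2 (f := E) hcont⟩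

end Stmt11Aux


open Finset AbsCx

namespace Stmt11Aux

/-- update a row by a linear combination of the rows scales the determinant. -/
lemma alt_update_combo {k : ℕ} (f : (Fin k → ℤ) [⋀^Fin k]→ₗ[ℤ] ℤ)
    (v : Fin k → Fin k → ℤ) (i : Fin k) (c : Fin k → ℤ) :
    f (Function.update v i (∑ j, c j • v j)) = c i * f v := by
  rw [AlternatingMap.map_update_sum]
  rw [Finset.sum_eq_single i]
  · rw [AlternatingMap.map_update_smul, Function.update_eq_self, smul_eq_mul]
  · intro j _ hji
    rw [AlternatingMap.map_update_smul]
    have h0 : f (Function.update v i (v j)) = 0 := by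
      apply f.map_eq_zero_of_eq _ (i := i) (j := j)
      · rw [Function.update_self, Function.update_of_ne hji]
      · exact fun h => hji (h ▸ rfl)
    rw [h0, smul_zero]
  · intro h
    exact absurd (Finset.mem_univ i) h

lemma det_rows_update_combo {k : ℕ} (v : Fin k → Fin k → ℤ) (i : Fin k) (c : Fin k → ℤ) :
    Matrix.det (Matrix.of (Function.update v i (∑ j, c j • v j))) =
      c i * Matrix.det (Matrix.of v) :=
  alt_update_combo Matrix.detRowAlternating v i c

lemma det_rows_perm {k : ℕ} (v : Fin k → Fin k → ℤ) (σ : Equiv.Perm (Fin k)) :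
    Matrix.det (Matrix.of (fun j => v (σ j))) =
      (Equiv.Perm.sign σ : ℤ) * Matrix.det (Matrix.of v) :=
  Matrix.det_permute σ (Matrix.of v)

lemma det_perm_rows_ne_zero {k : ℕ} (z : Fin k → Fin k) (hz : Function.Injective z) :
    Matrix.det (Matrix.of fun j l => if z j = l then (1:ℤ) else 0) ≠ 0 := by
  have hbij : Function.Bijective z := Finite.injective_iff_bijective.mp hz
  have hmat : Matrix.of (fun j l => if z j = l then (1:ℤ) else 0) =
      (show Equiv.Perm (Fin k) from Equiv.ofBijective z hbij).permMatrix ℤ := by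
    ext j l
    by_cases h : z j = l
    · simp [Equiv.Perm.permMatrix, PEquiv.toMatrix_apply, Equiv.toPEquiv_apply,
        Equiv.ofBijective_apply, h]
    · simp [Equiv.Perm.permMatrix, PEquiv.toMatrix_apply, Equiv.toPEquiv_apply,
        Equiv.ofBijective_apply, h, show ¬ l = z j from fun hh => h hh.symm]
  rw [hmat, Matrix.det_permutation]
  exact Units.ne_zero _

/-! ## the target sphere orientation data -/

def rho (n : ℕ) : Fin (n+2) → Fin (n+1) → ℤ := fun m k =>
  if (m : ℕ) = (k : ℕ) then 1 else if (m : ℕ) = n+1 then -1 else 0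

def detL (n : ℕ) (y : Fin (n+1) → Fin (n+2)) : ℤ :=
  Matrix.det (Matrix.of fun i k => rho n (y i) k)

lemma sum_rho (n : ℕ) (k : Fin (n+1)) : ∑ m : Fin (n+2), rho n m k = 0 := by
  have hk : (k : ℕ) < n + 1 := k.isLt
  have hsplit : ∀ m : Fin (n+2), rho n m k =
      (if m = (⟨(k:ℕ), by omega⟩ : Fin (n+2)) then 1 else 0) +
      (if m = (⟨n+1, by omega⟩ : Fin (n+2)) then (-1) else 0) := by
    intro m
    have e1 : m = (⟨(k:ℕ), by omega⟩ : Fin (n+2)) ↔ (m:ℕ) = (k:ℕ) :=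
      ⟨fun h => by rw [h], fun h => Fin.ext h⟩
    have e2 : m = (⟨n+1, by omega⟩ : Fin (n+2)) ↔ (m:ℕ) = n+1 :=
      ⟨fun h => by rw [h], fun h => Fin.ext h⟩
    simp only [e1, e2]
    unfold rho
    split_ifs <;> omega
  rw [Finset.sum_congr rfl fun m _ => hsplit m, Finset.sum_add_distrib,
    Finset.sum_ite_eq' Finset.univ, Finset.sum_ite_eq' Finset.univ]
  simp

lemma detL_not_inj (n : ℕ) (y : Fin (n+1) → Fin (n+2)) (hy : ¬ Function.Injective y) :
    detL n y = 0 := by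
  simp only [Function.Injective, not_forall] at hy
  obtain ⟨i, j, hij, hne⟩ := hy
  exact Matrix.det_zero_of_row_eq hne (by funext k; simp [Matrix.of_apply, hij])

lemma detL_comp_perm (n : ℕ) (y : Fin (n+1) → Fin (n+2)) (σ : Equiv.Perm (Fin (n+1))) :
    detL n (y ∘ σ) = (Equiv.Perm.sign σ : ℤ) * detL n y :=
  det_rows_perm (fun i k => rho n (y i) k) σ

/-- adjacent orderings have opposite determinants. -/
lemma detL_adjacent (n : ℕ) (x y : Fin (n+1) → Fin (n+2)) (i : Fin (n+1))
    (hxy : ∀ j, j ≠ i → x j = y j) (hx : Function.Injective x)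
    (hy : Function.Injective y) (hne : x i ≠ y i) :
    detL n y = - detL n x := by
  classical
  have hyi : y i ∉ Finset.image x Finset.univ := by
    intro hmem
    obtain ⟨j, _, hj⟩ := Finset.mem_image.mp hmem
    by_cases hji : j = i
    · exact hne (by rw [← hj, hji])
    · exact hji (hy (by rw [← hj, hxy j hji]))
  have hcardim : (Finset.image x Finset.univ).card = n + 1 := by
    rw [Finset.card_image_of_injective _ hx, Finset.card_univ, Fintype.card_fin]
  have huniv : insert (y i) (Finset.image x Finset.univ) = Finset.univ := by
    apply Finset.eq_of_subset_of_card_le (Finset.subset_univ _)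
    rw [Finset.card_insert_of_notMem hyi, hcardim, Finset.card_univ, Fintype.card_fin]
  -- rho (y i) = ∑ j, (-1) • rho (x j)
  have hcomb : ∀ k, rho n (y i) k = ∑ j : Fin (n+1), -(rho n (x j) k) := by
    intro k
    have h0 := sum_rho n k
    rw [← huniv, Finset.sum_insert hyi,
      Finset.sum_image (fun a _ b _ h => hx h)] at h0
    have : ∑ j : Fin (n+1), -rho n (x j) k = -∑ j : Fin (n+1), rho n (x j) k := by
      rw [Finset.sum_neg_distrib]
    rw [this]
    linarith
  have hcomb' : rho n (y i) =
      ∑ j : Fin (n+1), (fun _ : Fin (n+1) => (-1:ℤ)) j • (fun j k => rho n (x j) k) j := by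
    funext k
    rw [Finset.sum_apply]
    simp only [Pi.smul_apply, smul_eq_mul, neg_one_mul]
    exact hcomb k
  have hrow : (fun j k => rho n (y j) k) =
      Function.update (fun j k => rho n (x j) k) i (rho n (y i)) := by
    funext j
    by_cases hj : j = i
    · subst hj; rw [Function.update_self]
    · rw [Function.update_of_ne hj]
      funext k
      rw [hxy j hj]
  unfold detL
  rw [hrow, hcomb']
  exact (det_rows_update_combo (fun j k => rho n (x j) k) i (fun _ => (-1:ℤ))).trans
    (by ring)

end Stmt11Aux


open Finset AbsCx

namespace Stmt11Aux

lemma sum_indicator_perm {k : ℕ} (z : Fin k → Fin k) (hz : Function.Injective z) (l : Fin k) :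
    ∑ j, (if z j = l then (1:ℤ) else 0) = 1 := by
  have hbij : Function.Bijective z := Finite.injective_iff_bijective.mp hz
  rw [Fintype.sum_bijective z hbij _ (fun m => if m = l then (1:ℤ) else 0) (fun j => rfl)]
  rw [Finset.sum_ite_eq' Finset.univ]
  simp

lemma detL_ne_zero (n : ℕ) {y : Fin (n+1) → Fin (n+2)} (hy : Function.Injective y) :
    detL n y ≠ 0 := by
  classical
  by_cases hlast : ∃ j0, (y j0 : ℕ) = n + 1
  · obtain ⟨j0, hj0⟩ := hlast
    have hvals : ∀ j, j ≠ j0 → (y j : ℕ) < n + 1 := by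
      intro j hj
      have h1 : y j ≠ y j0 := fun h => hj (hy h)
      have h2 : (y j : ℕ) ≠ n + 1 := fun h => h1 (Fin.ext (h.trans hj0.symm))
      have := (y j).isLt
      omega
    -- the auxiliary injection on indices other than j0
    have himcard : (Finset.image (fun j => (⟨(y j : ℕ) % (n+1), Nat.mod_lt _ (by omega)⟩ : Fin (n+1)))
        (Finset.univ.erase j0)).card = n := by
      have hinj : Set.InjOn (fun j => (⟨(y j : ℕ) % (n+1), Nat.mod_lt _ (by omega)⟩ : Fin (n+1)))
          ↑(Finset.univ.erase j0) := by
        intro a ha b hb hab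
        have ha' := hvals a (Finset.mem_erase.mp (Finset.mem_coe.mp ha)).1
        have hb' := hvals b (Finset.mem_erase.mp (Finset.mem_coe.mp hb)).1
        have hv : (y a : ℕ) % (n+1) = (y b : ℕ) % (n+1) := congrArg Fin.val hab
        rw [Nat.mod_eq_of_lt ha', Nat.mod_eq_of_lt hb'] at hv
        exact hy (Fin.ext hv)
      rw [Finset.card_image_of_injOn hinj, Finset.card_erase_of_mem (Finset.mem_univ _),
        Finset.card_univ, Fintype.card_fin]
      omega
    have hexmiss : ∃ miss : Fin (n+1), miss ∉
        Finset.image (fun j => (⟨(y j : ℕ) % (n+1), Nat.mod_lt _ (by omega)⟩ : Fin (n+1)))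
          (Finset.univ.erase j0) := by
      by_contra hcon
      push_neg at hcon
      have hsub : (Finset.univ : Finset (Fin (n+1))) ⊆ _ := fun m _ => hcon m
      have hle := Finset.card_le_card hsub
      rw [himcard, Finset.card_univ, Fintype.card_fin] at hle
      omega
    obtain ⟨miss, hmiss⟩ := hexmiss
    -- the permutation-like map
    have hzinj : Function.Injective (fun j => if j = j0 then miss
        else (⟨(y j : ℕ) % (n+1), Nat.mod_lt _ (by omega)⟩ : Fin (n+1))) := by
      intro a b hab
      simp only at hab
      by_cases ha : a = j0 <;> by_cases hb : b = j0
      · rw [ha, hb]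
      · exfalso
        rw [if_pos ha, if_neg hb] at hab
        exact hmiss (hab ▸ Finset.mem_image_of_mem _
          (Finset.mem_erase.mpr ⟨hb, Finset.mem_univ b⟩))
      · exfalso
        rw [if_neg ha, if_pos hb] at hab
        exact hmiss (hab.symm ▸ Finset.mem_image_of_mem _
          (Finset.mem_erase.mpr ⟨ha, Finset.mem_univ a⟩))
      · rw [if_neg ha, if_neg hb] at hab
        have hv : (y a : ℕ) % (n+1) = (y b : ℕ) % (n+1) := congrArg Fin.val hab
        rw [Nat.mod_eq_of_lt (hvals a ha), Nat.mod_eq_of_lt (hvals b hb)] at hv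
        exact hy (Fin.ext hv)
    have hdet := det_perm_rows_ne_zero _ hzinj
    -- the sum of all rows of the permutation matrix is the all-ones vector
    have hsumrow : (∑ j : Fin (n+1), (fun _ : Fin (n+1) => (-1:ℤ)) j •
        (fun j l => if (if j = j0 then miss
          else (⟨(y j : ℕ) % (n+1), Nat.mod_lt _ (by omega)⟩ : Fin (n+1))) = l
          then (1:ℤ) else 0) j) = fun _ => (-1 : ℤ) := by
      funext l
      rw [Finset.sum_apply]
      simp only [Pi.smul_apply, smul_eq_mul, neg_one_mul]
      have : ∑ j : Fin (n+1), -(if (if j = j0 then miss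
          else (⟨(y j : ℕ) % (n+1), Nat.mod_lt _ (by omega)⟩ : Fin (n+1))) = l
          then (1:ℤ) else 0) = -∑ j : Fin (n+1), (if (if j = j0 then miss
          else (⟨(y j : ℕ) % (n+1), Nat.mod_lt _ (by omega)⟩ : Fin (n+1))) = l
          then (1:ℤ) else 0) := by
        rw [Finset.sum_neg_distrib]
      rw [this, sum_indicator_perm _ hzinj l]
    -- rows of the matrix for y
    have hrows : (fun j k => rho n (y j) k) =
        Function.update (fun j l => if (if j = j0 then miss
          else (⟨(y j : ℕ) % (n+1), Nat.mod_lt _ (by omega)⟩ : Fin (n+1))) = l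
          then (1:ℤ) else 0) j0
          (∑ j : Fin (n+1), (fun _ : Fin (n+1) => (-1:ℤ)) j •
            (fun j l => if (if j = j0 then miss
              else (⟨(y j : ℕ) % (n+1), Nat.mod_lt _ (by omega)⟩ : Fin (n+1))) = l
              then (1:ℤ) else 0) j) := by
      rw [hsumrow]
      funext j
      by_cases hj : j = j0
      · subst hj
        rw [Function.update_self]
        funext l
        unfold rho
        have hl := l.isLt
        rw [if_neg (by omega), if_pos hj0]
      · rw [Function.update_of_ne hj]
        funext l
        unfold rho
        have hjlt := hvals j hj
        have he : ((if j = j0 then miss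
            else (⟨(y j : ℕ) % (n+1), Nat.mod_lt _ (by omega)⟩ : Fin (n+1))) = l)
            ↔ ((y j : ℕ) = (l : ℕ)) := by
          rw [if_neg hj]
          constructor
          · intro h
            have hv : (y j : ℕ) % (n+1) = (l : ℕ) := congrArg Fin.val h
            rwa [Nat.mod_eq_of_lt hjlt] at hv
          · intro h
            apply Fin.ext
            show (y j : ℕ) % (n+1) = (l : ℕ)
            rw [Nat.mod_eq_of_lt hjlt]; exact h
        by_cases hc : (y j : ℕ) = (l : ℕ)
        · rw [if_pos hc, if_pos (he.mpr hc)]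
        · rw [if_neg hc, if_neg (fun h => hc (he.mp h)), if_neg (by omega)]
    unfold detL
    rw [hrows, det_rows_update_combo]
    simpa using hdet
  · push_neg at hlast
    have hvals : ∀ j, (y j : ℕ) < n + 1 := by
      intro j
      have := (y j).isLt
      have := hlast j
      omega
    have hzinj : Function.Injective
        (fun j => (⟨(y j : ℕ) % (n+1), Nat.mod_lt _ (by omega)⟩ : Fin (n+1))) := by
      intro a b hab
      have hv : (y a : ℕ) % (n+1) = (y b : ℕ) % (n+1) := congrArg Fin.val hab
      rw [Nat.mod_eq_of_lt (hvals a), Nat.mod_eq_of_lt (hvals b)] at hv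
      exact hy (Fin.ext hv)
    have hrows : (fun j k => rho n (y j) k) =
        (fun j l => if (⟨(y j : ℕ) % (n+1), Nat.mod_lt _ (by omega)⟩ : Fin (n+1)) = l
          then (1:ℤ) else 0) := by
      funext j l
      unfold rho
      have hjlt := hvals j
      have he : ((⟨(y j : ℕ) % (n+1), Nat.mod_lt _ (by omega)⟩ : Fin (n+1)) = l)
          ↔ ((y j : ℕ) = (l : ℕ)) := by
        constructor
        · intro h
          have hv : (y j : ℕ) % (n+1) = (l : ℕ) := congrArg Fin.val h
          rwa [Nat.mod_eq_of_lt hjlt] at hv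
        · intro h
          apply Fin.ext
          show (y j : ℕ) % (n+1) = (l : ℕ)
          rw [Nat.mod_eq_of_lt hjlt]; exact h
      by_cases hc : (y j : ℕ) = (l : ℕ)
      · rw [if_pos hc, if_pos (he.mpr hc)]
      · rw [if_neg hc, if_neg (fun h => hc (he.mp h)), if_neg (by omega)]
    unfold detL
    rw [hrows]
    exact det_perm_rows_ne_zero _ hzinj

/-- The coherent orientation on the standard sphere. -/
noncomputable def oL (n : ℕ) : CoherentOrientation n (stdSphere n) where
  sign y := Int.sign (detL n y)
  sign_perm x σ := by
    show (detL n (x ∘ σ)).sign = (Equiv.Perm.sign σ : ℤ) * (detL n x).sign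
    rw [detL_comp_perm]
    rcases Int.units_eq_one_or (Equiv.Perm.sign σ) with h | h <;> rw [h]
    · simp
    · simp only [Units.val_neg, Units.val_one, neg_one_mul, Int.sign_neg]
  sign_unit y hy _ := by
    have h := detL_ne_zero n hy
    rcases lt_trichotomy (detL n y) 0 with hlt | heq | hgt
    · right
      show (detL n y).sign = -1
      rwa [Int.sign_eq_neg_one_iff_neg]
    · exact absurd heq h
    · left
      show (detL n y).sign = 1
      rwa [Int.sign_eq_one_iff_pos]
  sign_zero y h := by
    rcases h with h | h
    · show (detL n y).sign = 0
      rw [detL_not_inj n y h, Int.sign_zero]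
    · exfalso
      apply h
      constructor
      · exact ⟨y 0, Finset.mem_image_of_mem y (Finset.mem_univ 0)⟩
      · intro hU
        have hcard := congrArg Finset.card hU
        rw [Finset.card_univ, Fintype.card_fin] at hcard
        have hle := Finset.card_image_le (f := y) (s := Finset.univ)
        rw [Finset.card_univ, Fintype.card_fin] at hle
        omega
  coherent x y hadj hx hy := by
    obtain ⟨i, hne, hagree⟩ := hadj
    have hdx : detL n x ≠ 0 := fun h => hx (by show Int.sign (detL n x) = 0; rw [h, Int.sign_zero])
    have hdy : detL n y ≠ 0 := fun h => hy (by show Int.sign (detL n y) = 0; rw [h, Int.sign_zero])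
    have hxinj : Function.Injective x := by
      by_contra h; exact hdx (detL_not_inj n x h)
    have hyinj : Function.Injective y := by
      by_contra h; exact hdy (detL_not_inj n y h)
    show Int.sign (detL n y) = - Int.sign (detL n x)
    rw [detL_adjacent n x y i hagree hxinj hyinj hne, Int.sign_neg]

end Stmt11Aux


open Finset AbsCx

namespace Stmt11Aux

/-! ## vertices and facets of the source complex -/

def pv (n : ℕ) (j : ℕ) : Fin (2*n+4) := ⟨j % (2*n+4), Nat.mod_lt _ (by omega)⟩

lemma pv_val (n : ℕ) {j : ℕ} (h : j < 2*n+4) : ((pv n j : Fin (2*n+4)) : ℕ) = j :=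
  Nat.mod_eq_of_lt h

def fmap (n : ℕ) : Fin (2*n+4) → Fin (n+2) := fun v => ⟨(v : ℕ) % (n+2), Nat.mod_lt _ (by omega)⟩

lemma fmap_val (n : ℕ) (v : Fin (2*n+4)) : ((fmap n v : Fin (n+2)) : ℕ) = (v : ℕ) % (n+2) := rfl

def Af (n i : ℕ) : Finset (Fin (2*n+4)) :=
  Finset.univ.filter (fun v => (v:ℕ) < n+2 ∧ (v:ℕ) ≠ i)
def Bf (n i : ℕ) : Finset (Fin (2*n+4)) :=
  Finset.univ.filter (fun v => ((v:ℕ) < n+1 ∧ (v:ℕ) ≠ i) ∨ (v:ℕ) = n+2+i)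
def Cf (n i j : ℕ) : Finset (Fin (2*n+4)) :=
  Finset.univ.filter (fun v =>
    ((v:ℕ) < n+1 ∧ (v:ℕ) ≠ i ∧ (v:ℕ) ≠ j) ∨ (v:ℕ) = n+2+i ∨ (v:ℕ) = 2*n+3)
def Df (n i : ℕ) : Finset (Fin (2*n+4)) :=
  Finset.univ.filter (fun v => ((v:ℕ) < n+1 ∧ (v:ℕ) ≠ i) ∨ (v:ℕ) = 2*n+3)

@[simp] lemma mem_Af {n i : ℕ} {v : Fin (2*n+4)} :
    v ∈ Af n i ↔ (v:ℕ) < n+2 ∧ (v:ℕ) ≠ i := by simp [Af]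
@[simp] lemma mem_Bf {n i : ℕ} {v : Fin (2*n+4)} :
    v ∈ Bf n i ↔ ((v:ℕ) < n+1 ∧ (v:ℕ) ≠ i) ∨ (v:ℕ) = n+2+i := by simp [Bf]
@[simp] lemma mem_Cf {n i j : ℕ} {v : Fin (2*n+4)} :
    v ∈ Cf n i j ↔ ((v:ℕ) < n+1 ∧ (v:ℕ) ≠ i ∧ (v:ℕ) ≠ j) ∨ (v:ℕ) = n+2+i ∨ (v:ℕ) = 2*n+3 := by
  simp [Cf]
@[simp] lemma mem_Df {n i : ℕ} {v : Fin (2*n+4)} :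
    v ∈ Df n i ↔ ((v:ℕ) < n+1 ∧ (v:ℕ) ≠ i) ∨ (v:ℕ) = 2*n+3 := by simp [Df]

/-- transfer of cardinalities of val-filters to ℕ ranges. -/
lemma card_val_filter {N : ℕ} (p : ℕ → Prop) [DecidablePred p] :
    (Finset.univ.filter (fun v : Fin N => p (v:ℕ))).card = ((Finset.range N).filter p).card := by
  refine Finset.card_bij (fun v _ => (v : ℕ)) ?_ ?_ ?_
  · intro a ha
    simp only [Finset.mem_filter, Finset.mem_univ, true_and] at ha
    simp only [Finset.mem_filter, Finset.mem_range]
    exact ⟨a.isLt, ha⟩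
  · intro a _ b _ h
    exact Fin.ext h
  · intro b hb
    simp only [Finset.mem_filter, Finset.mem_range] at hb
    refine ⟨⟨b, hb.1⟩, ?_, rfl⟩
    simp only [Finset.mem_filter, Finset.mem_univ, true_and]
    exact hb.2

lemma card_Af {n i : ℕ} (hi : i ≤ n+1) : (Af n i).card = n+1 := by
  unfold Af
  rw [card_val_filter (fun m => m < n+2 ∧ m ≠ i)]
  have he : (Finset.range (2*n+4)).filter (fun m => m < n+2 ∧ m ≠ i) =
      (Finset.range (n+2)).erase i := by
    ext m
    simp only [Finset.mem_filter, Finset.mem_range, Finset.mem_erase]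
    omega
  rw [he, Finset.card_erase_of_mem (Finset.mem_range.mpr (by omega)), Finset.card_range]
  omega

lemma card_Bf {n i : ℕ} (hi : i ≤ n) : (Bf n i).card = n+1 := by
  unfold Bf
  rw [card_val_filter (fun m => (m < n+1 ∧ m ≠ i) ∨ m = n+2+i)]
  have he : (Finset.range (2*n+4)).filter (fun m => (m < n+1 ∧ m ≠ i) ∨ m = n+2+i) =
      insert (n+2+i) ((Finset.range (n+1)).erase i) := by
    ext m
    simp only [Finset.mem_filter, Finset.mem_range, Finset.mem_insert, Finset.mem_erase]
    omega
  rw [he, Finset.card_insert_of_notMem (by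
    simp only [Finset.mem_erase, Finset.mem_range]; omega),
    Finset.card_erase_of_mem (Finset.mem_range.mpr (by omega)), Finset.card_range]
  omega

lemma card_Df {n i : ℕ} (hi : i ≤ n) : (Df n i).card = n+1 := by
  unfold Df
  rw [card_val_filter (fun m => (m < n+1 ∧ m ≠ i) ∨ m = 2*n+3)]
  have he : (Finset.range (2*n+4)).filter (fun m => (m < n+1 ∧ m ≠ i) ∨ m = 2*n+3) =
      insert (2*n+3) ((Finset.range (n+1)).erase i) := by
    ext m
    simp only [Finset.mem_filter, Finset.mem_range, Finset.mem_insert, Finset.mem_erase]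
    omega
  rw [he, Finset.card_insert_of_notMem (by
    simp only [Finset.mem_erase, Finset.mem_range]; omega),
    Finset.card_erase_of_mem (Finset.mem_range.mpr (by omega)), Finset.card_range]
  omega

lemma card_Cf {n i j : ℕ} (hi : i ≤ n) (hj : j ≤ n) (hij : i ≠ j) :
    (Cf n i j).card = n+1 := by
  unfold Cf
  rw [card_val_filter (fun m => (m < n+1 ∧ m ≠ i ∧ m ≠ j) ∨ m = n+2+i ∨ m = 2*n+3)]
  have he : (Finset.range (2*n+4)).filter
      (fun m => (m < n+1 ∧ m ≠ i ∧ m ≠ j) ∨ m = n+2+i ∨ m = 2*n+3) =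
      insert (2*n+3) (insert (n+2+i) (((Finset.range (n+1)).erase i).erase j)) := by
    ext m
    simp only [Finset.mem_filter, Finset.mem_range, Finset.mem_insert, Finset.mem_erase]
    omega
  rw [he, Finset.card_insert_of_notMem (by
      simp only [Finset.mem_insert, Finset.mem_erase, Finset.mem_range]; omega),
    Finset.card_insert_of_notMem (by
      simp only [Finset.mem_erase, Finset.mem_range]; omega),
    Finset.card_erase_of_mem (by
      simp only [Finset.mem_erase, Finset.mem_range]; omega),
    Finset.card_erase_of_mem (Finset.mem_range.mpr (by omega)), Finset.card_range]
  omega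

end Stmt11Aux


open Finset AbsCx

namespace Stmt11Aux

def FacetsK (n : ℕ) : Finset (Finset (Fin (2*n+4))) :=
  ((Finset.range (n+1)).image (Af n)) ∪ ((Finset.range (n+1)).image (Bf n)) ∪
    (((Finset.range (n+1)).offDiag).image (fun p => Cf n p.1 p.2))

lemma mem_FacetsK {n : ℕ} {S : Finset (Fin (2*n+4))} : S ∈ FacetsK n ↔
    (∃ i ≤ n, S = Af n i) ∨ (∃ i ≤ n, S = Bf n i) ∨
      (∃ i j, i ≤ n ∧ j ≤ n ∧ i ≠ j ∧ S = Cf n i j) := by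
  unfold FacetsK
  simp only [Finset.mem_union, Finset.mem_image, Finset.mem_range, Finset.mem_offDiag]
  constructor
  · rintro ((⟨i, hi, rfl⟩ | ⟨i, hi, rfl⟩) | ⟨⟨i, j⟩, ⟨hi, hj, hij⟩, rfl⟩)
    · exact Or.inl ⟨i, by omega, rfl⟩
    · exact Or.inr (Or.inl ⟨i, by omega, rfl⟩)
    · exact Or.inr (Or.inr ⟨i, j, by simp only [Finset.mem_range] at hi; omega,
        by simp only [Finset.mem_range] at hj; omega, hij, rfl⟩)
  · rintro (⟨i, hi, rfl⟩ | ⟨i, hi, rfl⟩ | ⟨i, j, hi, hj, hij, rfl⟩)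
    · exact Or.inl (Or.inl ⟨i, by omega, rfl⟩)
    · exact Or.inl (Or.inr ⟨i, by omega, rfl⟩)
    · exact Or.inr ⟨⟨i, j⟩, ⟨by simp only [Finset.mem_range]; omega,
        by simp only [Finset.mem_range]; omega, hij⟩, rfl⟩

lemma card_mem_FacetsK {n : ℕ} {S : Finset (Fin (2*n+4))} (hS : S ∈ FacetsK n) :
    S.card = n + 1 := by
  rcases mem_FacetsK.mp hS with ⟨i, hi, rfl⟩ | ⟨i, hi, rfl⟩ | ⟨i, j, hi, hj, hij, rfl⟩
  · exact card_Af (by omega)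
  · exact card_Bf hi
  · exact card_Cf hi hj hij

lemma fmap_val_eq {n : ℕ} (v : Fin (2*n+4)) :
    ((fmap n v : Fin (n+2)) : ℕ) =
      if (v:ℕ) < n+2 then (v:ℕ) else (v:ℕ) - (n+2) := by
  rw [fmap_val]
  split
  · exact Nat.mod_eq_of_lt (by omega)
  · rename_i h
    have hv := v.isLt
    have h2 : (v:ℕ) = (n+2) + ((v:ℕ) - (n+2)) := by omega
    rw [h2, Nat.add_mod_left, Nat.mod_eq_of_lt (by omega)]
    omega

lemma pv_ne {n a b : ℕ} (ha : a < 2*n+4) (hb : b < 2*n+4) (h : a ≠ b) :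
    pv n a ≠ pv n b := by
  intro he
  apply h
  have := congrArg Fin.val he
  rwa [pv_val n ha, pv_val n hb] at this

lemma fmap_inj_facet {n : ℕ} {S : Finset (Fin (2*n+4))} (hS : S ∈ FacetsK n)
    {v v' : Fin (2*n+4)} (hv : v ∈ S) (hv' : v' ∈ S) (h : fmap n v = fmap n v') : v = v' := by
  have hval : ((fmap n v : Fin (n+2)) : ℕ) = ((fmap n v' : Fin (n+2)) : ℕ) := congrArg Fin.val h
  rw [fmap_val_eq, fmap_val_eq] at hval
  have hlt := v.isLt
  have hlt' := v'.isLt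
  apply Fin.ext
  rcases mem_FacetsK.mp hS with ⟨i, hi, rfl⟩ | ⟨i, hi, rfl⟩ | ⟨i, j, hi, hj, hij, rfl⟩
  · rw [mem_Af] at hv hv'
    split_ifs at hval <;> omega
  · rw [mem_Bf] at hv hv'
    split_ifs at hval <;> omega
  · rw [mem_Cf] at hv hv'
    split_ifs at hval <;> omega

lemma image_Af {n i : ℕ} (hi : i ≤ n+1) :
    Finset.image (fmap n) (Af n i) =
      Finset.univ.filter (fun m : Fin (n+2) => (m:ℕ) ≠ i) := by
  ext m
  simp only [Finset.mem_image, mem_Af, Finset.mem_filter, Finset.mem_univ, true_and]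
  constructor
  · rintro ⟨v, ⟨hv1, hv2⟩, rfl⟩
    rw [fmap_val, Nat.mod_eq_of_lt hv1]
    exact hv2
  · intro hm
    refine ⟨pv n (m:ℕ), ⟨?_, ?_⟩, ?_⟩
    · rw [pv_val n (by omega)]; exact m.isLt
    · rw [pv_val n (by omega)]; exact hm
    · apply Fin.ext
      rw [fmap_val, pv_val n (by omega), Nat.mod_eq_of_lt m.isLt]

lemma image_Bf {n i : ℕ} (hi : i ≤ n) :
    Finset.image (fmap n) (Bf n i) =
      Finset.univ.filter (fun m : Fin (n+2) => (m:ℕ) ≠ n+1) := by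
  ext m
  simp only [Finset.mem_image, mem_Bf, Finset.mem_filter, Finset.mem_univ, true_and]
  constructor
  · rintro ⟨v, hv, rfl⟩
    rw [fmap_val]
    rcases hv with ⟨hv1, hv2⟩ | hv1
    · rw [Nat.mod_eq_of_lt (by omega)]; omega
    · rw [hv1, show n+2+i = (n+2)+i from rfl, Nat.add_mod_left, Nat.mod_eq_of_lt (by omega)]
      omega
  · intro hm
    have hmlt : (m:ℕ) < n+1 := by have := m.isLt; omega
    by_cases hmi : (m:ℕ) = i
    · refine ⟨pv n (n+2+i), Or.inr (pv_val n (by omega)), ?_⟩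
      apply Fin.ext
      rw [fmap_val, pv_val n (by omega), show n+2+i = (n+2)+i from rfl, Nat.add_mod_left,
        Nat.mod_eq_of_lt (by omega), hmi]
    · refine ⟨pv n (m:ℕ), Or.inl ⟨by rw [pv_val n (by omega)]; omega,
        by rw [pv_val n (by omega)]; exact hmi⟩, ?_⟩
      apply Fin.ext
      rw [fmap_val, pv_val n (by omega), Nat.mod_eq_of_lt (by omega)]

lemma image_Cf {n i j : ℕ} (hi : i ≤ n) (hj : j ≤ n) (hij : i ≠ j) :
    Finset.image (fmap n) (Cf n i j) =
      Finset.univ.filter (fun m : Fin (n+2) => (m:ℕ) ≠ j) := by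
  ext m
  simp only [Finset.mem_image, mem_Cf, Finset.mem_filter, Finset.mem_univ, true_and]
  constructor
  · rintro ⟨v, hv, rfl⟩
    rw [fmap_val]
    rcases hv with ⟨hv1, hv2, hv3⟩ | hv1 | hv1
    · rw [Nat.mod_eq_of_lt (by omega)]; exact hv3
    · rw [hv1, show n+2+i = (n+2)+i from rfl, Nat.add_mod_left, Nat.mod_eq_of_lt (by omega)]
      omega
    · rw [hv1, show 2*n+3 = (n+2)+(n+1) from by omega, Nat.add_mod_left,
        Nat.mod_eq_of_lt (by omega)]
      omega
  · intro hm
    by_cases hmi : (m:ℕ) = i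
    · refine ⟨pv n (n+2+i), Or.inr (Or.inl (pv_val n (by omega))), ?_⟩
      apply Fin.ext
      rw [fmap_val, pv_val n (by omega), show n+2+i = (n+2)+i from rfl, Nat.add_mod_left,
        Nat.mod_eq_of_lt (by omega), hmi]
    · by_cases hmtop : (m:ℕ) = n+1
      · refine ⟨pv n (2*n+3), Or.inr (Or.inr (pv_val n (by omega))), ?_⟩
        apply Fin.ext
        rw [fmap_val, pv_val n (by omega), show 2*n+3 = (n+2)+(n+1) from by omega,
          Nat.add_mod_left, Nat.mod_eq_of_lt (by omega), hmtop]
      · have hmlt : (m:ℕ) < n+1 := by have := m.isLt; omega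
        refine ⟨pv n (m:ℕ), Or.inl ⟨by rw [pv_val n (by omega)]; omega,
          by rw [pv_val n (by omega)]; exact hmi, by rw [pv_val n (by omega)]; exact hm⟩, ?_⟩
        apply Fin.ext
        rw [fmap_val, pv_val n (by omega), Nat.mod_eq_of_lt (by omega)]

end Stmt11Aux


open Finset AbsCx

namespace Stmt11Aux

lemma Af_inj {n i i' : ℕ} (hi : i ≤ n+1) (hi' : i' ≤ n+1) (h : Af n i = Af n i') : i = i' := by
  by_contra hne
  have hmem : pv n i' ∈ Af n i := by rw [mem_Af, pv_val n (by omega)]; omega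
  rw [h, mem_Af, pv_val n (by omega)] at hmem
  omega

lemma Bf_inj {n i i' : ℕ} (hi : i ≤ n) (hi' : i' ≤ n) (h : Bf n i = Bf n i') : i = i' := by
  have hmem : pv n (n+2+i) ∈ Bf n i := by rw [mem_Bf, pv_val n (by omega)]; omega
  rw [h, mem_Bf, pv_val n (by omega)] at hmem
  omega

lemma Df_inj {n i i' : ℕ} (hi : i ≤ n) (hi' : i' ≤ n) (h : Df n i = Df n i') : i = i' := by
  by_contra hne
  have hmem : pv n i' ∈ Df n i := by rw [mem_Df, pv_val n (by omega)]; omega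
  rw [h, mem_Df, pv_val n (by omega)] at hmem
  omega

lemma Cf_inj {n i j i' j' : ℕ} (hi : i ≤ n) (hj : j ≤ n) (hij : i ≠ j)
    (hi' : i' ≤ n) (hj' : j' ≤ n) (hij' : i' ≠ j') (h : Cf n i j = Cf n i' j') :
    i = i' ∧ j = j' := by
  have hii : i = i' := by
    have hmem : pv n (n+2+i) ∈ Cf n i j := by rw [mem_Cf, pv_val n (by omega)]; omega
    rw [h, mem_Cf, pv_val n (by omega)] at hmem
    omega
  subst hii
  refine ⟨rfl, ?_⟩
  by_contra hne
  have hmem : pv n j ∈ Cf n i j' := by rw [mem_Cf, pv_val n (by omega)]; omega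
  rw [← h, mem_Cf, pv_val n (by omega)] at hmem
  omega

lemma Af_ne_Bf {n i i' : ℕ} (hi : i ≤ n+1) (hi' : i' ≤ n) : Af n i ≠ Bf n i' := by
  intro h
  have hmem : pv n (n+2+i') ∈ Bf n i' := by rw [mem_Bf, pv_val n (by omega)]; omega
  rw [← h, mem_Af, pv_val n (by omega)] at hmem
  omega

lemma Af_ne_Cf {n i i' j' : ℕ} (hi : i ≤ n+1) : Af n i ≠ Cf n i' j' := by
  intro h
  have hmem : pv n (2*n+3) ∈ Cf n i' j' := by rw [mem_Cf, pv_val n (by omega)]; omega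
  rw [← h, mem_Af, pv_val n (by omega)] at hmem
  omega

lemma Bf_ne_Cf {n i i' j' : ℕ} (hi : i ≤ n) : Bf n i ≠ Cf n i' j' := by
  intro h
  have hmem : pv n (2*n+3) ∈ Cf n i' j' := by rw [mem_Cf, pv_val n (by omega)]; omega
  rw [← h, mem_Bf, pv_val n (by omega)] at hmem
  omega

lemma Af_ne_Df {n i i' : ℕ} (hi : i ≤ n+1) : Af n i ≠ Df n i' := by
  intro h
  have hmem : pv n (2*n+3) ∈ Df n i' := by rw [mem_Df, pv_val n (by omega)]; omega
  rw [← h, mem_Af, pv_val n (by omega)] at hmem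
  omega

lemma Df_ne_Bf {n i i' : ℕ} (hi : i ≤ n) (hi' : i' ≤ n) : Df n i ≠ Bf n i' := by
  intro h
  have hmem : pv n (2*n+3) ∈ Df n i := by rw [mem_Df, pv_val n (by omega)]; omega
  rw [h, mem_Bf, pv_val n (by omega)] at hmem
  omega

lemma Df_ne_Cf {n i i' j' : ℕ} (hi : i ≤ n) (hi' : i' ≤ n) : Df n i ≠ Cf n i' j' := by
  intro h
  have hmem : pv n (n+2+i') ∈ Cf n i' j' := by rw [mem_Cf, pv_val n (by omega)]; omega
  rw [← h, mem_Df, pv_val n (by omega)] at hmem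
  omega

lemma card_FacetsK (n : ℕ) : (FacetsK n).card = (n+1) * (n+2) := by
  classical
  have hAB : Disjoint ((Finset.range (n+1)).image (Af n)) ((Finset.range (n+1)).image (Bf n)) := by
    rw [Finset.disjoint_left]
    rintro S hA hB
    obtain ⟨i, hi, rfl⟩ := Finset.mem_image.mp hA
    obtain ⟨i', hi', hBe⟩ := Finset.mem_image.mp hB
    exact Af_ne_Bf (by simp only [Finset.mem_range] at hi; omega)
      (by simp only [Finset.mem_range] at hi'; omega) hBe.symm
  have hABC : Disjoint (((Finset.range (n+1)).image (Af n)) ∪ ((Finset.range (n+1)).image (Bf n)))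
      (((Finset.range (n+1)).offDiag).image (fun p => Cf n p.1 p.2)) := by
    rw [Finset.disjoint_left]
    rintro S hAB hC
    obtain ⟨⟨i', j'⟩, _, hCe⟩ := Finset.mem_image.mp hC
    rcases Finset.mem_union.mp hAB with hA | hB
    · obtain ⟨i, hi, rfl⟩ := Finset.mem_image.mp hA
      exact Af_ne_Cf (by simp only [Finset.mem_range] at hi; omega) hCe.symm
    · obtain ⟨i, hi, rfl⟩ := Finset.mem_image.mp hB
      exact Bf_ne_Cf (by simp only [Finset.mem_range] at hi; omega) hCe.symm
  unfold FacetsK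
  rw [Finset.card_union_of_disjoint hABC, Finset.card_union_of_disjoint hAB]
  have hcA : ((Finset.range (n+1)).image (Af n)).card = n+1 := by
    rw [Finset.card_image_of_injOn, Finset.card_range]
    intro a ha b hb h
    simp only [Finset.coe_range, Set.mem_Iio] at ha hb
    exact Af_inj (by omega) (by omega) h
  have hcB : ((Finset.range (n+1)).image (Bf n)).card = n+1 := by
    rw [Finset.card_image_of_injOn, Finset.card_range]
    intro a ha b hb h
    simp only [Finset.coe_range, Set.mem_Iio] at ha hb
    exact Bf_inj (by omega) (by omega) h
  have hcC : (((Finset.range (n+1)).offDiag).image (fun p => Cf n p.1 p.2)).card =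
      (n+1)*(n+1) - (n+1) := by
    rw [Finset.card_image_of_injOn, Finset.offDiag_card, Finset.card_range]
    intro a ha b hb h
    simp only [Finset.mem_coe, Finset.mem_offDiag, Finset.mem_range] at ha hb
    obtain ⟨h1, h2⟩ := Cf_inj (by omega) (by omega) ha.2.2 (by omega) (by omega) hb.2.2 h
    exact Prod.ext h1 h2
  rw [hcA, hcB, hcC]
  have h3 : n+1 ≤ (n+1)*(n+1) := Nat.le_mul_of_pos_left _ (by omega)
  have h4 : (n+1)*(n+2) = (n+1)*(n+1) + (n+1) := by ring
  rw [h4]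
  generalize (n+1)*(n+1) = m at h3 ⊢
  omega

/-- No facet is obtained from another by swapping an unprimed vertex for its primed copy. -/
lemma no_prime_swap {n : ℕ} (hn : 2 ≤ n) {ℓ : ℕ} (hℓ : ℓ ≤ n+1) {S T : Finset (Fin (2*n+4))}
    (hS : S ∈ FacetsK n) (hT : T ∈ FacetsK n) (hup : pv n ℓ ∈ S)
    (hTeq : T = insert (pv n (n+2+ℓ)) (S.erase (pv n ℓ))) : False := by
  have memT : ∀ v, v ∈ T ↔ v = pv n (n+2+ℓ) ∨ (v ∈ S ∧ v ≠ pv n ℓ) := by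
    intro v
    rw [hTeq, Finset.mem_insert, Finset.mem_erase]
    tauto
  have hprT : pv n (n+2+ℓ) ∈ T := (memT _).mpr (Or.inl rfl)
  rcases mem_FacetsK.mp hS with ⟨i, hi, rfl⟩ | ⟨i, hi, rfl⟩ | ⟨i, j, hi, hj, hij, rfl⟩
  · -- S = Af i
    rw [mem_Af, pv_val n (by omega)] at hup
    rcases mem_FacetsK.mp hT with ⟨i', hi', hTe⟩ | ⟨i', hi', hTe⟩ | ⟨i', j', hi', hj', hij', hTe⟩
    · rw [hTe, mem_Af, pv_val n (by omega)] at hprT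
      omega
    · rw [hTe, mem_Bf, pv_val n (by omega)] at hprT
      have hli' : ℓ = i' := by omega
      have hwT : pv n (n+1) ∈ T := by
        refine (memT _).mpr (Or.inr ⟨?_, pv_ne (by omega) (by omega) (by omega)⟩)
        rw [mem_Af, pv_val n (by omega)]
        omega
      rw [hTe, mem_Bf, pv_val n (by omega)] at hwT
      omega
    · rw [hTe, mem_Cf, pv_val n (by omega)] at hprT
      by_cases hcase : ℓ = n+1
      · have hwT : pv n (n+2+i') ∈ T := by
          rw [hTe, mem_Cf, pv_val n (by omega)]
          omega
        rcases (memT _).mp hwT with he | ⟨hmem, _⟩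
        · have := congrArg Fin.val he
          rw [pv_val n (by omega), pv_val n (by omega)] at this
          omega
        · rw [mem_Af, pv_val n (by omega)] at hmem
          omega
      · have hli' : ℓ = i' := by omega
        have hwT : pv n (2*n+3) ∈ T := by
          rw [hTe, mem_Cf, pv_val n (by omega)]
          omega
        rcases (memT _).mp hwT with he | ⟨hmem, _⟩
        · have := congrArg Fin.val he
          rw [pv_val n (by omega), pv_val n (by omega)] at this
          omega
        · rw [mem_Af, pv_val n (by omega)] at hmem
          omega
  · -- S = Bf i
    rw [mem_Bf, pv_val n (by omega)] at hup
    have hupl : ℓ < n+1 ∧ ℓ ≠ i := by omega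
    have hpriT : pv n (n+2+i) ∈ T := by
      refine (memT _).mpr (Or.inr ⟨?_, pv_ne (by omega) (by omega) (by omega)⟩)
      rw [mem_Bf, pv_val n (by omega)]
      omega
    rcases mem_FacetsK.mp hT with ⟨i', hi', hTe⟩ | ⟨i', hi', hTe⟩ | ⟨i', j', hi', hj', hij', hTe⟩
    · rw [hTe, mem_Af, pv_val n (by omega)] at hprT
      omega
    · rw [hTe, mem_Bf, pv_val n (by omega)] at hprT
      rw [hTe, mem_Bf, pv_val n (by omega)] at hpriT
      omega
    · rw [hTe, mem_Cf, pv_val n (by omega)] at hprT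
      rw [hTe, mem_Cf, pv_val n (by omega)] at hpriT
      omega
  · -- S = Cf i j
    rw [mem_Cf, pv_val n (by omega)] at hup
    have hupl : ℓ < n+1 ∧ ℓ ≠ i ∧ ℓ ≠ j := by omega
    have hpriT : pv n (n+2+i) ∈ T := by
      refine (memT _).mpr (Or.inr ⟨?_, pv_ne (by omega) (by omega) (by omega)⟩)
      rw [mem_Cf, pv_val n (by omega)]
      omega
    have htopT : pv n (2*n+3) ∈ T := by
      refine (memT _).mpr (Or.inr ⟨?_, pv_ne (by omega) (by omega) (by omega)⟩)
      rw [mem_Cf, pv_val n (by omega)]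
      omega
    rcases mem_FacetsK.mp hT with ⟨i', hi', hTe⟩ | ⟨i', hi', hTe⟩ | ⟨i', j', hi', hj', hij', hTe⟩
    · rw [hTe, mem_Af, pv_val n (by omega)] at hprT
      omega
    · rw [hTe, mem_Bf, pv_val n (by omega)] at htopT
      omega
    · rw [hTe, mem_Cf, pv_val n (by omega)] at hprT
      rw [hTe, mem_Cf, pv_val n (by omega)] at hpriT
      omega

end Stmt11Aux


open Finset AbsCx

namespace Stmt11Aux

lemma eq_pv_iff {n X : ℕ} (hX : X < 2*n+4) (v : Fin (2*n+4)) : v = pv n X ↔ (v:ℕ) = X :=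
  ⟨fun h => by rw [h, pv_val n hX], fun h => Fin.ext (by rw [pv_val n hX]; exact h)⟩

def FamK (n k : ℕ) : Finset (Finset (Fin (2*n+4))) :=
  ((Finset.range (n+1)).image (Af n)) ∪ ((Finset.Ico k (n+1)).image (Df n)) ∪
    ((Finset.range k).image (Bf n)) ∪
    (((Finset.range (n+1)).offDiag.filter (fun p => p.1 < k)).image (fun p => Cf n p.1 p.2))

def SphFam (n : ℕ) : Finset (Finset (Fin (2*n+4))) := (Finset.range (n+2)).image (Af n)

lemma mem_FamK {n k : ℕ} {T : Finset (Fin (2*n+4))} (hk : k ≤ n+1) : T ∈ FamK n k ↔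
    (∃ i, i ≤ n ∧ T = Af n i) ∨ (∃ i, k ≤ i ∧ i ≤ n ∧ T = Df n i) ∨
    (∃ i, i < k ∧ i ≤ n ∧ T = Bf n i) ∨
    (∃ i j, i < k ∧ i ≤ n ∧ j ≤ n ∧ i ≠ j ∧ T = Cf n i j) := by
  unfold FamK
  simp only [Finset.mem_union, Finset.mem_image, Finset.mem_range, Finset.mem_Ico,
    Finset.mem_filter, Finset.mem_offDiag]
  constructor
  · rintro (((⟨i, hi, rfl⟩ | ⟨i, hi, rfl⟩) | ⟨i, hi, rfl⟩) | ⟨⟨i, j⟩, ⟨⟨hi, hj, hij⟩, hik⟩, rfl⟩)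
    · exact Or.inl ⟨i, by omega, rfl⟩
    · exact Or.inr (Or.inl ⟨i, by omega, by omega, rfl⟩)
    · exact Or.inr (Or.inr (Or.inl ⟨i, by omega, by omega, rfl⟩))
    · exact Or.inr (Or.inr (Or.inr ⟨i, j, by omega, by omega, by omega, hij, rfl⟩))
  · rintro (⟨i, hi, rfl⟩ | ⟨i, hk', hi, rfl⟩ | ⟨i, hik, hi, rfl⟩ | ⟨i, j, hik, hi, hj, hij, rfl⟩)
    · exact Or.inl (Or.inl (Or.inl ⟨i, by omega, rfl⟩))
    · exact Or.inl (Or.inl (Or.inr ⟨i, by omega, rfl⟩))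
    · exact Or.inl (Or.inr ⟨i, by omega, rfl⟩)
    · exact Or.inr ⟨⟨i, j⟩, ⟨⟨by omega, by omega, hij⟩, by omega⟩, rfl⟩

lemma card_mem_SphFam {n : ℕ} {T : Finset (Fin (2*n+4))} (hT : T ∈ SphFam n) :
    T.card = n+1 := by
  obtain ⟨i, hi, rfl⟩ := Finset.mem_image.mp hT
  exact card_Af (by simp only [Finset.mem_range] at hi; omega)

lemma card_mem_FamK {n k : ℕ} (hk : k ≤ n+1) {T : Finset (Fin (2*n+4))}
    (hT : T ∈ FamK n k) : T.card = n+1 := by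
  rcases (mem_FamK hk).mp hT with ⟨i, hi, rfl⟩ | ⟨i, _, hi, rfl⟩ | ⟨i, _, hi, rfl⟩ |
    ⟨i, j, _, hi, hj, hij, rfl⟩
  · exact card_Af (by omega)
  · exact card_Df hi
  · exact card_Bf hi
  · exact card_Cf hi hj hij

lemma fresh_SphFam {n : ℕ} : ∀ T ∈ SphFam n, pv n (2*n+3) ∉ T := by
  intro T hT hmem
  obtain ⟨i, _, rfl⟩ := Finset.mem_image.mp hT
  rw [mem_Af, pv_val n (by omega)] at hmem
  omega

lemma fresh_FamK {n k : ℕ} (hk : k ≤ n) : ∀ T ∈ FamK n k, pv n (n+2+k) ∉ T := by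
  intro T hT hmem
  rcases (mem_FamK (by omega)).mp hT with ⟨i, hi, rfl⟩ | ⟨i, hk', hi, rfl⟩ |
    ⟨i, hik, hi, rfl⟩ | ⟨i, j, hik, hi, hj, hij, rfl⟩
  · rw [mem_Af, pv_val n (by omega)] at hmem; omega
  · rw [mem_Df, pv_val n (by omega)] at hmem; omega
  · rw [mem_Bf, pv_val n (by omega)] at hmem; omega
  · rw [mem_Cf, pv_val n (by omega)] at hmem; omega

lemma insert_erase_G {n m : ℕ} (hm : m ≤ n) :
    insert (pv n (2*n+3)) ((Af n (n+1)).erase (pv n m)) = Df n m := by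
  ext v
  simp only [Finset.mem_insert, Finset.mem_erase, ne_eq, mem_Af, mem_Df,
    eq_pv_iff (show 2*n+3 < 2*n+4 by omega) v, eq_pv_iff (show m < 2*n+4 by omega) v]
  have := v.isLt
  constructor
  · rintro (h | ⟨h1, h2, h3⟩) <;> omega
  · rintro (⟨h1, h2⟩ | h) <;> omega

lemma insert_erase_Df_top {n k : ℕ} (hk : k ≤ n) :
    insert (pv n (n+2+k)) ((Df n k).erase (pv n (2*n+3))) = Bf n k := by
  ext v
  simp only [Finset.mem_insert, Finset.mem_erase, ne_eq, mem_Df, mem_Bf,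
    eq_pv_iff (show n+2+k < 2*n+4 by omega) v, eq_pv_iff (show 2*n+3 < 2*n+4 by omega) v]
  have := v.isLt
  constructor
  · rintro (h | ⟨h1, h2⟩) <;> omega
  · rintro (⟨h1, h2⟩ | h) <;> omega

lemma insert_erase_Df_up {n k j : ℕ} (hk : k ≤ n) (hj : j ≤ n) (hjk : j ≠ k) :
    insert (pv n (n+2+k)) ((Df n k).erase (pv n j)) = Cf n k j := by
  ext v
  simp only [Finset.mem_insert, Finset.mem_erase, ne_eq, mem_Df, mem_Cf,
    eq_pv_iff (show n+2+k < 2*n+4 by omega) v, eq_pv_iff (show j < 2*n+4 by omega) v]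
  have := v.isLt
  constructor
  · rintro (h | ⟨h1, h2⟩) <;> omega
  · rintro (⟨h1, h2, h3⟩ | h | h) <;> omega

lemma stackFam_zero (n : ℕ) :
    stackFam (SphFam n) (Af n (n+1)) (pv n (2*n+3)) = FamK n 0 := by
  classical
  ext T
  rw [mem_stackFam, mem_FamK (by omega)]
  constructor
  · rintro (⟨hT, hne⟩ | ⟨u, hu, rfl⟩)
    · obtain ⟨i, hi, rfl⟩ := Finset.mem_image.mp hT
      simp only [Finset.mem_range] at hi
      refine Or.inl ⟨i, ?_, rfl⟩
      by_contra hgt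
      exact hne (by rw [show i = n+1 by omega])
    · rw [mem_Af] at hu
      have hu' : u = pv n (u:ℕ) := Fin.ext (by rw [pv_val n u.isLt])
      rw [hu', insert_erase_G (by omega)]
      exact Or.inr (Or.inl ⟨(u:ℕ), by omega, by omega, rfl⟩)
  · rintro (⟨i, hi, rfl⟩ | ⟨i, _, hi, rfl⟩ | ⟨i, hik, _, _⟩ | ⟨i, j, hik, _, _, _, _⟩)
    · refine Or.inl ⟨Finset.mem_image.mpr ⟨i, Finset.mem_range.mpr (by omega), rfl⟩, ?_⟩
      intro h
      have := Af_inj (by omega) (by omega) h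
      omega
    · refine Or.inr ⟨pv n i, ?_, ?_⟩
      · rw [mem_Af, pv_val n (by omega)]; omega
      · rw [insert_erase_G hi]
    · omega
    · omega

lemma stackFam_step {n k : ℕ} (hk : k ≤ n) :
    stackFam (FamK n k) (Df n k) (pv n (n+2+k)) = FamK n (k+1) := by
  classical
  ext T
  rw [mem_stackFam]
  constructor
  · rintro (⟨hT, hne⟩ | ⟨u, hu, rfl⟩)
    · rcases (mem_FamK (by omega)).mp hT with ⟨i, hi, rfl⟩ | ⟨i, hk', hi, rfl⟩ |
        ⟨i, hik, hi, rfl⟩ | ⟨i, j, hik, hi, hj, hij, rfl⟩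
      · exact (mem_FamK (by omega)).mpr (Or.inl ⟨i, hi, rfl⟩)
      · refine (mem_FamK (by omega)).mpr (Or.inr (Or.inl ⟨i, ?_, hi, rfl⟩))
        have : i ≠ k := fun h => hne (by rw [h])
        omega
      · exact (mem_FamK (by omega)).mpr (Or.inr (Or.inr (Or.inl ⟨i, by omega, hi, rfl⟩)))
      · exact (mem_FamK (by omega)).mpr
          (Or.inr (Or.inr (Or.inr ⟨i, j, by omega, hi, hj, hij, rfl⟩)))
    · rw [mem_Df] at hu
      rcases hu with ⟨h1, h2⟩ | h1
      · have hu' : u = pv n (u:ℕ) := Fin.ext (by rw [pv_val n u.isLt])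
        rw [hu', insert_erase_Df_up hk (by omega) (by omega)]
        exact (mem_FamK (by omega)).mpr
          (Or.inr (Or.inr (Or.inr ⟨k, (u:ℕ), by omega, by omega, by omega, by omega, rfl⟩)))
      · have hu' : u = pv n (2*n+3) := Fin.ext (by rw [pv_val n (by omega)]; exact h1)
        rw [hu', insert_erase_Df_top hk]
        exact (mem_FamK (by omega)).mpr (Or.inr (Or.inr (Or.inl ⟨k, by omega, by omega, rfl⟩)))
  · intro hT
    rcases (mem_FamK (by omega)).mp hT with ⟨i, hi, rfl⟩ | ⟨i, hk', hi, rfl⟩ |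
      ⟨i, hik, hi, rfl⟩ | ⟨i, j, hik, hi, hj, hij, rfl⟩
    · exact Or.inl ⟨(mem_FamK (by omega)).mpr (Or.inl ⟨i, hi, rfl⟩), Af_ne_Df (by omega)⟩
    · refine Or.inl ⟨(mem_FamK (by omega)).mpr (Or.inr (Or.inl ⟨i, by omega, hi, rfl⟩)), ?_⟩
      intro h
      have := Df_inj hi hk h
      omega
    · by_cases hik' : i = k
      · subst hik'
        refine Or.inr ⟨pv n (2*n+3), ?_, (insert_erase_Df_top hk).symm⟩
        rw [mem_Df, pv_val n (by omega)]
        omega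
      · refine Or.inl ⟨(mem_FamK (by omega)).mpr
          (Or.inr (Or.inr (Or.inl ⟨i, by omega, hi, rfl⟩))), ?_⟩
        intro h
        exact Df_ne_Bf hk hi h.symm
    · by_cases hik' : i = k
      · subst hik'
        refine Or.inr ⟨pv n j, ?_, (insert_erase_Df_up hk hj (fun h => hij h.symm)).symm⟩
        rw [mem_Df, pv_val n (by omega)]
        omega
      · refine Or.inl ⟨(mem_FamK (by omega)).mpr
          (Or.inr (Or.inr (Or.inr ⟨i, j, by omega, hi, hj, hij, rfl⟩))), ?_⟩
        intro h
        exact Df_ne_Cf hk hi h.symm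

theorem real_FacetsK_homeo_SphFam (n : ℕ) :
    Nonempty (((gen (FacetsK n)).realization) ≃ₜ ((gen (SphFam n)).realization)) := by
  classical
  have hAtop : Af n (n+1) ∈ SphFam n :=
    Finset.mem_image.mpr ⟨n+1, Finset.mem_range.mpr (by omega), rfl⟩
  have step0 : Nonempty ((gen (FamK n 0)).realization ≃ₜ (gen (SphFam n)).realization) := by
    have h := stack_homeo (F := SphFam n) (S := Af n (n+1)) (w := pv n (2*n+3)) hAtop
      (fun T hT => by rw [card_mem_SphFam hT, card_Af (le_refl (n+1))])
      (Finset.card_pos.mp (by rw [card_Af (le_refl (n+1))]; omega))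
      fresh_SphFam
    rwa [stackFam_zero n] at h
  have step : ∀ k, k ≤ n →
      Nonempty ((gen (FamK n (k+1))).realization ≃ₜ (gen (FamK n k)).realization) := by
    intro k hk
    have hDf : Df n k ∈ FamK n k :=
      (mem_FamK (by omega)).mpr (Or.inr (Or.inl ⟨k, le_rfl, hk, rfl⟩))
    have h := stack_homeo (F := FamK n k) (w := pv n (n+2+k)) hDf
      (fun T hT => by rw [card_mem_FamK (by omega) hT, card_Df hk])
      (Finset.card_pos.mp (by rw [card_Df hk]; omega))
      (fresh_FamK hk)
    rwa [stackFam_step hk] at h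
  have main : ∀ k, k ≤ n+1 →
      Nonempty ((gen (FamK n k)).realization ≃ₜ (gen (SphFam n)).realization) := by
    intro k
    induction k with
    | zero => exact fun _ => step0
    | succ k ih =>
      intro hk
      obtain ⟨e1⟩ := step k (by omega)
      obtain ⟨e2⟩ := ih (by omega)
      exact ⟨e1.trans e2⟩
  have hfin : FamK n (n+1) = FacetsK n := by
    unfold FamK FacetsK
    rw [Finset.Ico_self, Finset.image_empty, Finset.union_empty]
    congr 1
    congr 1
    apply Finset.filter_true_of_mem
    intro p hp
    rw [Finset.mem_offDiag] at hp
    have := Finset.mem_range.mp hp.1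
    omega
  obtain ⟨e⟩ := main (n+1) (le_refl _)
  rw [hfin] at e
  exact ⟨e⟩

end Stmt11Aux


open Finset AbsCx

namespace Stmt11Aux

lemma sum_over_Af {n i : ℕ} (g : Fin (2*n+4) → ℝ) :
    ∑ v ∈ Af n i, g v = ∑ m ∈ (Finset.range (n+2)).erase i, g (pv n m) := by
  refine Finset.sum_bij (fun v _ => (v:ℕ)) ?_ ?_ ?_ ?_
  · intro a ha
    rw [mem_Af] at ha
    simp only [Finset.mem_erase, Finset.mem_range]
    exact ⟨ha.2, ha.1⟩
  · intro a _ b _ h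
    exact Fin.ext h
  · intro b hb
    simp only [Finset.mem_erase, Finset.mem_range] at hb
    refine ⟨pv n b, ?_, pv_val n (by omega)⟩
    rw [mem_Af, pv_val n (by omega)]
    omega
  · intro a ha
    congr 1
    exact Fin.ext (by rw [pv_val n a.isLt])

lemma real_sph_iff {n : ℕ} {g : Fin (2*n+4) → ℝ} :
    g ∈ (gen (SphFam n)).realization ↔
      (∀ v, 0 ≤ g v) ∧ (∀ v : Fin (2*n+4), n+2 ≤ (v:ℕ) → g v = 0) ∧
      (∑ m ∈ Finset.range (n+2), g (pv n m) = 1) ∧ (∃ i ≤ n+1, g (pv n i) = 0) := by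
  have hne : ∀ T ∈ SphFam n, T.Nonempty := fun T hT =>
    Finset.card_pos.mp (by rw [card_mem_SphFam hT]; omega)
  rw [mem_real_gen hne]
  constructor
  · rintro ⟨h0, T, hT, hz, hsum⟩
    obtain ⟨i, hi, rfl⟩ := Finset.mem_image.mp hT
    rw [Finset.mem_range] at hi
    have hgi : g (pv n i) = 0 := by
      apply hz
      rw [mem_Af, pv_val n (by omega)]
      omega
    refine ⟨h0, ?_, ?_, ⟨i, by omega, hgi⟩⟩
    · intro v hv
      apply hz
      rw [mem_Af]
      omega
    · rw [sum_over_Af g] at hsum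
      have hins : Finset.range (n+2) = insert i ((Finset.range (n+2)).erase i) :=
        (Finset.insert_erase (Finset.mem_range.mpr hi)).symm
      rw [hins, Finset.sum_insert (Finset.notMem_erase _ _), hgi, zero_add]
      exact hsum
  · rintro ⟨h0, hz, hsum, i, hi, hgi⟩
    refine ⟨h0, Af n i, Finset.mem_image.mpr ⟨i, Finset.mem_range.mpr (by omega), rfl⟩, ?_, ?_⟩
    · intro v hv
      rw [mem_Af] at hv
      push_neg at hv
      by_cases hlt : (v:ℕ) < n+2
      · have : v = pv n i := Fin.ext (by rw [pv_val n (by omega)]; exact hv hlt)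
        rw [this]
        exact hgi
      · exact hz v (by omega)
    · rw [sum_over_Af g]
      have hins : Finset.range (n+2) = insert i ((Finset.range (n+2)).erase i) :=
        (Finset.insert_erase (Finset.mem_range.mpr (by omega))).symm
      rw [hins, Finset.sum_insert (Finset.notMem_erase _ _), hgi, zero_add] at hsum
      exact hsum

set_option maxHeartbeats 1000000 in
/-- radial projection homeomorphism for the base octahedral-like sphere family. -/
theorem real_SphFam_homeo_sphere (n : ℕ) :
    Nonempty (((gen (SphFam n)).realization) ≃ₜ
      Metric.sphere (0 : EuclideanSpace ℝ (Fin (n+1))) 1) := by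
  classical
  set c : ℝ := ((n:ℝ)+2)⁻¹ with hc
  have hcpos : 0 < c := by rw [hc]; positivity
  have hcsum : ((n:ℝ)+2) * c = 1 := by
    rw [hc]; field_simp
  set dv : (Fin (2*n+4) → ℝ) → EuclideanSpace ℝ (Fin (n+1)) :=
    fun g => WithLp.toLp 2 (fun i => g (pv n (i:ℕ)) - c) with hdv
  have hdv_apply : ∀ g i, dv g i = g (pv n (i:ℕ)) - c := fun g i => rfl
  have hdvne : ∀ g ∈ (gen (SphFam n)).realization, dv g ≠ 0 := by
    intro g hg hzero
    obtain ⟨h0, hz, hsum, i, hi, hgi⟩ := real_sph_iff.mp hg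
    have hcoord : ∀ m, m ≤ n → g (pv n m) = c := by
      intro m hm
      have h1 : g (pv n m) - c = (0:ℝ) := congrArg (fun x : EuclideanSpace ℝ (Fin (n+1)) => x ⟨m, by omega⟩) hzero
      linarith
    have hlast : g (pv n (n+1)) = c := by
      have hs : ∑ m ∈ Finset.range (n+2), g (pv n m) =
          (∑ m ∈ Finset.range (n+1), g (pv n m)) + g (pv n (n+1)) :=
        Finset.sum_range_succ _ _
      have hsc : ∑ m ∈ Finset.range (n+1), g (pv n m) = ((n:ℝ)+1) * c := by
        rw [Finset.sum_congr rfl (fun m hm => hcoord m (by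
          simp only [Finset.mem_range] at hm; omega)), Finset.sum_const, Finset.card_range,
          nsmul_eq_mul]
        push_cast
        ring
      rw [hs, hsc] at hsum
      nlinarith [hsum, hcsum]
    have hzero2 : g (pv n i) = c := by
      by_cases hi' : i ≤ n
      · exact hcoord i hi'
      · rw [show i = n+1 by omega]
        exact hlast
    rw [hgi] at hzero2
    linarith
  have hmem_sphere : ∀ g ∈ (gen (SphFam n)).realization,
      (‖dv g‖⁻¹ • dv g) ∈ Metric.sphere (0 : EuclideanSpace ℝ (Fin (n+1))) 1 := by
    intro g hg
    rw [mem_sphere_zero_iff_norm, norm_smul, norm_inv, norm_norm]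
    exact inv_mul_cancel₀ (norm_ne_zero_iff.mpr (hdvne g hg))
  set Φ : ((gen (SphFam n)).realization) → (Metric.sphere (0 : EuclideanSpace ℝ (Fin (n+1))) 1) :=
    fun g => ⟨‖dv g.1‖⁻¹ • dv g.1, hmem_sphere g.1 g.2⟩ with hΦ
  -- the coordinate relation under proportionality
  have hrel : ∀ g ∈ (gen (SphFam n)).realization, ∀ g' ∈ (gen (SphFam n)).realization,
      ∀ t : ℝ, dv g = t • dv g' → ∀ m, m ≤ n+1 → g (pv n m) - c = t * (g' (pv n m) - c) := by
    intro g hg g' hg' t hprop m hm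
    obtain ⟨h0, hz, hsum, _⟩ := real_sph_iff.mp hg
    obtain ⟨h0', hz', hsum', _⟩ := real_sph_iff.mp hg'
    by_cases hm' : m ≤ n
    · have h1 := congrArg (fun x : EuclideanSpace ℝ (Fin (n+1)) => x ⟨m, by omega⟩) hprop
      simpa only [hdv_apply, PiLp.smul_apply, smul_eq_mul] using h1
    · have hm2 : m = n+1 := by omega
      subst hm2
      have hsg : (∑ m ∈ Finset.range (n+1), g (pv n m)) + g (pv n (n+1)) = 1 := by
        rw [← Finset.sum_range_succ]
        exact hsum
      have hsg' : (∑ m ∈ Finset.range (n+1), g' (pv n m)) + g' (pv n (n+1)) = 1 := by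
        rw [← Finset.sum_range_succ]
        exact hsum'
      have hSrel : (∑ m ∈ Finset.range (n+1), g (pv n m)) - ((n:ℝ)+1) * c =
          t * ((∑ m ∈ Finset.range (n+1), g' (pv n m)) - ((n:ℝ)+1) * c) := by
        have expand : ∀ h : Fin (2*n+4) → ℝ,
            ∑ m ∈ Finset.range (n+1), (h (pv n m) - c) =
            (∑ m ∈ Finset.range (n+1), h (pv n m)) - ((n:ℝ)+1) * c := by
          intro h
          rw [Finset.sum_sub_distrib, Finset.sum_const, Finset.card_range, nsmul_eq_mul]
          push_cast
          ring
        rw [← expand g, ← expand g', Finset.mul_sum]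
        apply Finset.sum_congr rfl
        intro m hm
        simp only [Finset.mem_range] at hm
        have h1 := congrArg (fun x : EuclideanSpace ℝ (Fin (n+1)) => x ⟨m, by omega⟩) hprop
        simpa only [hdv_apply, PiLp.smul_apply, smul_eq_mul] using h1
      have hc1 : ((n:ℝ)+1) * c = 1 - c := by nlinarith [hcsum]
      have hA : g (pv n (n+1)) - c =
          -((∑ m ∈ Finset.range (n+1), g (pv n m)) - ((n:ℝ)+1) * c) := by
        rw [hc1]; linarith
      have hB : g' (pv n (n+1)) - c =
          -((∑ m ∈ Finset.range (n+1), g' (pv n m)) - ((n:ℝ)+1) * c) := by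
        rw [hc1]; linarith
      rw [hA, hB, hSrel]
      ring
  -- injectivity
  have hinj : Function.Injective Φ := by
    rintro ⟨g, hg⟩ ⟨g', hg'⟩ heq
    have hv : ‖dv g‖⁻¹ • dv g = ‖dv g'‖⁻¹ • dv g' := congrArg Subtype.val heq
    have hng : ‖dv g‖ ≠ 0 := norm_ne_zero_iff.mpr (hdvne g hg)
    have hng' : ‖dv g'‖ ≠ 0 := norm_ne_zero_iff.mpr (hdvne g' hg')
    have hprop : dv g = (‖dv g‖ * ‖dv g'‖⁻¹) • dv g' := by
      rw [mul_smul, ← hv, smul_smul, mul_inv_cancel₀ hng, one_smul]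
    have htpos : 0 < ‖dv g‖ * ‖dv g'‖⁻¹ := by
      have h1 : 0 < ‖dv g‖ := lt_of_le_of_ne (norm_nonneg _) (Ne.symm hng)
      have h2 : 0 < ‖dv g'‖ := lt_of_le_of_ne (norm_nonneg _) (Ne.symm hng')
      positivity
    set t : ℝ := ‖dv g‖ * ‖dv g'‖⁻¹ with ht
    have hR := hrel g hg g' hg' t hprop
    obtain ⟨h0, hz, hsum, i, hi, hgi⟩ := real_sph_iff.mp hg
    obtain ⟨h0', hz', hsum', i', hi', hgi'⟩ := real_sph_iff.mp hg'
    have e1 : g (pv n i') - c = t * (0 - c) := by rw [← hgi']; exact hR i' hi'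
    have ht1 : t ≤ 1 := by nlinarith [h0 (pv n i'), e1, hcpos]
    have e2 : 0 - c = t * (g' (pv n i) - c) := by rw [← hgi]; exact hR i hi
    have ht2 : 1 ≤ t := by nlinarith [h0' (pv n i), e2, hcpos, htpos]
    have ht3 : t = 1 := le_antisymm ht1 ht2
    apply Subtype.ext
    show g = g'
    funext v
    by_cases hvlt : (v:ℕ) < n+2
    · have hveq : v = pv n (v:ℕ) := Fin.ext (by rw [pv_val n v.isLt])
      have h3 := hR (v:ℕ) (by omega)
      rw [ht3, one_mul] at h3
      have h4 : g (pv n (v:ℕ)) = g' (pv n (v:ℕ)) := by linarith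
      rwa [← hveq] at h4
    · rw [hz v (by omega), hz' v (by omega)]
  -- surjectivity
  have hsurj : Function.Surjective Φ := by
    rintro ⟨u, hu⟩
    have hu' : ‖u‖ = 1 := mem_sphere_zero_iff_norm.mp hu
    have hune : u ≠ 0 := by
      intro h
      rw [h, norm_zero] at hu'
      exact one_ne_zero hu'.symm
    set xc : ℕ → ℝ := fun m => if h : m < n+1 then u ⟨m, h⟩ else -(∑ i, u i) with hxc
    have hxck : ∀ i : Fin (n+1), xc (i:ℕ) = u i := by
      intro i
      show (if h : (i:ℕ) < n+1 then u ⟨(i:ℕ), h⟩ else -(∑ i, u i)) = u i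
      rw [dif_pos i.isLt]
    have hxctop : xc (n+1) = -(∑ i, u i) := dif_neg (by omega)
    have hxsum : ∑ m ∈ Finset.range (n+2), xc m = 0 := by
      rw [Finset.sum_range_succ]
      have h1 : ∑ m ∈ Finset.range (n+1), xc m = ∑ i : Fin (n+1), u i := by
        rw [← Fin.sum_univ_eq_sum_range xc (n+1)]
        exact Finset.sum_congr rfl fun i _ => hxck i
      rw [h1, hxctop]
      ring
    have hrange_ne : (Finset.range (n+2)).Nonempty := ⟨0, Finset.mem_range.mpr (by omega)⟩
    set μ : ℝ := (Finset.range (n+2)).inf' hrange_ne xc with hμ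
    have hμle : ∀ m ∈ Finset.range (n+2), μ ≤ xc m := fun m hm => Finset.inf'_le _ hm
    have hμneg : μ < 0 := by
      by_contra hge
      push_neg at hge
      have hall : ∀ m ∈ Finset.range (n+2), xc m = 0 := by
        intro m hm
        have h1 : 0 ≤ xc m := le_trans hge (hμle m hm)
        by_contra hne0
        have hlt : 0 < xc m := lt_of_le_of_ne h1 (Ne.symm hne0)
        have hpos : 0 < ∑ m ∈ Finset.range (n+2), xc m :=
          Finset.sum_pos' (fun b hb => le_trans hge (hμle b hb)) ⟨m, hm, hlt⟩
        rw [hxsum] at hpos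
        exact lt_irrefl 0 hpos
      apply hune
      refine PiLp.ext fun i => ?_
      have h2 := hall (i:ℕ) (Finset.mem_range.mpr (by omega))
      rw [hxck i] at h2
      exact h2
    set t : ℝ := -(c/μ) with htdef
    have htpos : 0 < t := by
      rw [htdef]
      have h1 : c/μ < 0 := div_neg_of_pos_of_neg hcpos hμneg
      linarith
    have hμne : μ ≠ 0 := ne_of_lt hμneg
    have htμ : t * μ = -c := by
      rw [htdef, neg_mul, div_mul_cancel₀ _ hμne]
    set gu : Fin (2*n+4) → ℝ := fun v => if (v:ℕ) < n+2 then c + t * xc (v:ℕ) else 0 with hgu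
    have hguval : ∀ m, m < n+2 → gu (pv n m) = c + t * xc m := by
      intro m hm
      show (if ((pv n m : Fin (2*n+4)):ℕ) < n+2 then c + t * xc ((pv n m : Fin (2*n+4)):ℕ) else 0)
        = c + t * xc m
      rw [pv_val n (by omega), if_pos hm]
    have hgumem : gu ∈ (gen (SphFam n)).realization := by
      rw [real_sph_iff]
      refine ⟨?_, ?_, ?_, ?_⟩
      · intro v
        show 0 ≤ (if (v:ℕ) < n+2 then c + t * xc (v:ℕ) else 0)
        split
        · rename_i hvl
          have h1 : t * μ ≤ t * xc (v:ℕ) :=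
            mul_le_mul_of_nonneg_left (hμle _ (Finset.mem_range.mpr hvl)) htpos.le
          linarith [htμ]
        · exact le_refl 0
      · intro v hv
        show (if (v:ℕ) < n+2 then c + t * xc (v:ℕ) else 0) = 0
        rw [if_neg (by omega)]
      · rw [Finset.sum_congr rfl (fun m hm => hguval m (Finset.mem_range.mp hm)),
          Finset.sum_add_distrib, Finset.sum_const, Finset.card_range, ← Finset.mul_sum,
          hxsum, mul_zero, add_zero, nsmul_eq_mul]
        push_cast
        nlinarith [hcsum]
      · obtain ⟨m0, hm0mem, hm0⟩ := Finset.exists_mem_eq_inf' hrange_ne xc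
        rw [Finset.mem_range] at hm0mem
        refine ⟨m0, by omega, ?_⟩
        rw [hguval m0 hm0mem, ← hm0]
        linarith [htμ]
    refine ⟨⟨gu, hgumem⟩, ?_⟩
    apply Subtype.ext
    show ‖dv gu‖⁻¹ • dv gu = u
    have hdvgu : dv gu = t • u := by
      refine PiLp.ext fun i => ?_
      rw [hdv_apply, hguval (i:ℕ) (by omega), hxck i]
      show c + t * u i - c = t * u i
      ring
    rw [hdvgu, norm_smul, hu', mul_one, Real.norm_eq_abs, abs_of_pos htpos, smul_smul,
      inv_mul_cancel₀ htpos.ne', one_smul]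
  -- assemble
  haveI : CompactSpace ((gen (SphFam n)).realization) :=
    isCompact_iff_compactSpace.mp (isCompact_real_gen _ (fun T hT =>
      Finset.card_pos.mp (by rw [card_mem_SphFam hT]; omega)))
  have hdvcont : Continuous (fun g : ((gen (SphFam n)).realization) => dv g.1) := by
    have h1 : Continuous (fun g : Fin (2*n+4) → ℝ => dv g) := by
      rw [hdv]
      exact (PiLp.continuous_toLp 2 _).comp
        (continuous_pi (fun i => (continuous_apply (pv n (i:ℕ))).sub continuous_const))
    exact h1.comp continuous_subtype_val
  have hcont : Continuous Φ := by
    apply Continuous.subtype_mk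
    exact Continuous.smul ((continuous_norm.comp hdvcont).inv₀
      (fun x => norm_ne_zero_iff.mpr (hdvne x.1 x.2))) hdvcont
  let E := Equiv.ofBijective Φ ⟨hinj, hsurj⟩
  have hcontE : Continuous E := hcont
  exact ⟨Continuous.homeoOfEquivCompactToT2 hcontE⟩

end Stmt11Aux


open Finset AbsCx

namespace Stmt11Aux

/-- a face of cardinality `n+1` is a facet. -/
lemma face_card_facet {n : ℕ} {s : Finset (Fin (2*n+4))}
    (hs : s ∈ (gen (FacetsK n)).faces) (hcard : s.card = n+1) : s ∈ FacetsK n := by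
  obtain ⟨hne, T, hT, hsub⟩ := hs
  have : s = T := Finset.eq_of_subset_of_card_le hsub (by rw [card_mem_FacetsK hT, hcard])
  rwa [this]

lemma image_comp_perm {α : Type*} [DecidableEq α] {k : ℕ} (x : Fin k → α)
    (σ : Equiv.Perm (Fin k)) :
    Finset.image (x ∘ σ) Finset.univ = Finset.image x Finset.univ := by
  ext w
  simp only [Finset.mem_image, Finset.mem_univ, true_and, Function.comp_apply]
  constructor
  · rintro ⟨j, rfl⟩; exact ⟨σ j, rfl⟩
  · rintro ⟨j, rfl⟩; exact ⟨σ.symm j, by rw [Equiv.apply_symm_apply]⟩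

lemma image_adjacent {α : Type*} [DecidableEq α] {k : ℕ} (x y : Fin k → α) (i : Fin k)
    (hx : Function.Injective x) (hagree : ∀ j, j ≠ i → x j = y j) :
    Finset.image y Finset.univ = insert (y i) ((Finset.image x Finset.univ).erase (x i)) := by
  ext w
  simp only [Finset.mem_image, Finset.mem_insert, Finset.mem_erase, Finset.mem_univ, true_and]
  constructor
  · rintro ⟨j, rfl⟩
    by_cases hj : j = i
    · subst hj; exact Or.inl rfl
    · refine Or.inr ⟨?_, j, hagree j hj⟩
      rw [← hagree j hj]
      intro hxx
      exact hj (hx hxx)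
  · rintro (rfl | ⟨hne, j, rfl⟩)
    · exact ⟨i, rfl⟩
    · by_cases hj : j = i
      · subst hj; exact absurd rfl hne
      · exact ⟨j, (hagree j hj).symm⟩

open scoped Classical in
noncomputable def signK (n : ℕ) : (Fin (n+1) → Fin (2*n+4)) → ℤ := fun x =>
  if Finset.image x Finset.univ ∈ (gen (FacetsK n)).faces
    then Int.sign (detL n (fmap n ∘ x)) else 0

/-- the coherent orientation on the source complex, pulled back from the target. -/
noncomputable def oK (n : ℕ) (hn : 2 ≤ n) : CoherentOrientation n (gen (FacetsK n)) where
  sign := signK n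
  sign_perm x σ := by
    classical
    unfold signK
    rw [image_comp_perm]
    by_cases hface : Finset.image x Finset.univ ∈ (gen (FacetsK n)).faces
    · rw [if_pos hface, if_pos hface]
      have : fmap n ∘ (x ∘ σ) = (fmap n ∘ x) ∘ σ := rfl
      rw [this, detL_comp_perm]
      rcases Int.units_eq_one_or (Equiv.Perm.sign σ) with h | h <;> rw [h]
      · simp
      · simp only [Units.val_neg, Units.val_one, neg_one_mul, Int.sign_neg]
    · rw [if_neg hface, if_neg hface, mul_zero]
  sign_unit x hx hface := by
    classical
    unfold signK
    rw [if_pos hface]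
    have hfacet : Finset.image x Finset.univ ∈ FacetsK n :=
      face_card_facet hface (by rw [Finset.card_image_of_injective _ hx, Finset.card_univ,
        Fintype.card_fin])
    have hfinj : Function.Injective (fmap n ∘ x) := by
      intro a b hab
      apply hx
      exact fmap_inj_facet hfacet (Finset.mem_image_of_mem x (Finset.mem_univ a))
        (Finset.mem_image_of_mem x (Finset.mem_univ b)) hab
    have hd := detL_ne_zero n hfinj
    rcases lt_trichotomy (detL n (fmap n ∘ x)) 0 with hlt | heq | hgt
    · right; rwa [Int.sign_eq_neg_one_iff_neg]
    · exact absurd heq hd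
    · left; rwa [Int.sign_eq_one_iff_pos]
  sign_zero x h := by
    classical
    unfold signK
    rcases h with h | h
    · by_cases hface : Finset.image x Finset.univ ∈ (gen (FacetsK n)).faces
      · rw [if_pos hface]
        have : ¬ Function.Injective (fmap n ∘ x) := by
          intro hinj
          exact h (fun a b hab => hinj (by rw [Function.comp_apply, Function.comp_apply, hab]))
        rw [detL_not_inj n _ this, Int.sign_zero]
      · rw [if_neg hface]
    · rw [if_neg h]
  coherent x y hadj hx hy := by
    classical
    unfold signK at hx hy ⊢
    obtain ⟨i, hne, hagree⟩ := hadj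
    by_cases hfx : Finset.image x Finset.univ ∈ (gen (FacetsK n)).faces
    swap
    · exact absurd (if_neg hfx) hx
    by_cases hfy : Finset.image y Finset.univ ∈ (gen (FacetsK n)).faces
    swap
    · exact absurd (if_neg hfy) hy
    rw [if_pos hfx] at hx ⊢
    rw [if_pos hfy] at hy ⊢
    have hdx : detL n (fmap n ∘ x) ≠ 0 := fun h => hx (by rw [h, Int.sign_zero])
    have hdy : detL n (fmap n ∘ y) ≠ 0 := fun h => hy (by rw [h, Int.sign_zero])
    have hfxinj : Function.Injective (fmap n ∘ x) := by
      by_contra h; exact hdx (detL_not_inj n _ h)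
    have hfyinj : Function.Injective (fmap n ∘ y) := by
      by_contra h; exact hdy (detL_not_inj n _ h)
    have hxinj : Function.Injective x := fun a b hab => hfxinj (by
      rw [Function.comp_apply, Function.comp_apply, hab])
    have hyinj : Function.Injective y := fun a b hab => hfyinj (by
      rw [Function.comp_apply, Function.comp_apply, hab])
    have hfacx : Finset.image x Finset.univ ∈ FacetsK n :=
      face_card_facet hfx (by rw [Finset.card_image_of_injective _ hxinj, Finset.card_univ,
        Fintype.card_fin])
    have hfacy : Finset.image y Finset.univ ∈ FacetsK n :=
      face_card_facet hfy (by rw [Finset.card_image_of_injective _ hyinj, Finset.card_univ,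
        Fintype.card_fin])
    -- labels at the changed coordinate differ
    have hffne : fmap n (x i) ≠ fmap n (y i) := by
      intro hf
      have hvals := congrArg Fin.val hf
      rw [fmap_val_eq, fmap_val_eq] at hvals
      have hxv := (x i).isLt
      have hyv := (y i).isLt
      have hvne : ((x i):ℕ) ≠ ((y i):ℕ) := fun h => hne (Fin.ext h)
      -- one is the primed copy of the other
      by_cases hcase : ((x i):ℕ) < n+2
      · -- x i unprimed, y i primed
        have hyval : ((y i):ℕ) = n+2+((x i):ℕ) := by
          split_ifs at hvals <;> omega
        refine no_prime_swap hn (ℓ := ((x i):ℕ)) (by omega) hfacx hfacy ?_ ?_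
        · have : pv n ((x i):ℕ) = x i := Fin.ext (pv_val n (by omega))
          rw [this]
          exact Finset.mem_image_of_mem x (Finset.mem_univ i)
        · have h1 : pv n (n+2+((x i):ℕ)) = y i := Fin.ext (by
            rw [pv_val n (by omega)]; omega)
          have h2 : pv n ((x i):ℕ) = x i := Fin.ext (pv_val n (by omega))
          rw [h1, h2]
          exact image_adjacent x y i hxinj hagree
      · -- y i unprimed, x i primed
        have hyval : ((x i):ℕ) = n+2+((y i):ℕ) := by
          split_ifs at hvals <;> omega
        refine no_prime_swap hn (ℓ := ((y i):ℕ)) (by omega) hfacy hfacx ?_ ?_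
        · have : pv n ((y i):ℕ) = y i := Fin.ext (pv_val n (by omega))
          rw [this]
          exact Finset.mem_image_of_mem y (Finset.mem_univ i)
        · have h1 : pv n (n+2+((y i):ℕ)) = x i := Fin.ext (by
            rw [pv_val n (by omega)]; omega)
          have h2 : pv n ((y i):ℕ) = y i := Fin.ext (pv_val n (by omega))
          rw [h1, h2]
          exact image_adjacent y x i hyinj (fun j hj => (hagree j hj).symm)
    have hadj' := detL_adjacent n (fmap n ∘ x) (fmap n ∘ y) i
      (fun j hj => by rw [Function.comp_apply, Function.comp_apply, hagree j hj])
      hfxinj hfyinj hffne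
    rw [hadj', Int.sign_neg]

end Stmt11Aux


open Finset AbsCx

namespace Stmt11Aux

lemma val_missing_inj {n : ℕ} {a b : ℕ} (ha : a < n+2) (hb : b < n+2)
    (h : Finset.univ.filter (fun m' : Fin (n+2) => (m':ℕ) ≠ a) =
      Finset.univ.filter (fun m' : Fin (n+2) => (m':ℕ) ≠ b)) : a = b := by
  by_contra hne
  have hmem : (⟨a, ha⟩ : Fin (n+2)) ∈
      Finset.univ.filter (fun m' : Fin (n+2) => (m':ℕ) ≠ b) := by
    simp only [Finset.mem_filter, Finset.mem_univ, true_and]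
    exact hne
  rw [← h] at hmem
  simp only [Finset.mem_filter, Finset.mem_univ, true_and] at hmem
  exact hmem rfl

lemma missing_label' {n : ℕ} {y : Fin (n+1) → Fin (n+2)} (hy : Function.Injective y) :
    ∃ m0 : ℕ, m0 ≤ n+1 ∧ Finset.image y Finset.univ =
      Finset.univ.filter (fun m' : Fin (n+2) => (m':ℕ) ≠ m0) := by
  classical
  have hcard : (Finset.image y Finset.univ).card = n+1 := by
    rw [Finset.card_image_of_injective _ hy, Finset.card_univ, Fintype.card_fin]
  have hcompl : (Finset.univ \ Finset.image y Finset.univ).card = 1 := by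
    rw [Finset.card_sdiff_of_subset (Finset.subset_univ _), Finset.card_univ, Fintype.card_fin, hcard]
    omega
  obtain ⟨m0, hm0⟩ := Finset.card_eq_one.mp hcompl
  refine ⟨(m0 : ℕ), by omega, ?_⟩
  ext m'
  have h := Finset.ext_iff.mp hm0 m'
  rw [Finset.mem_sdiff, Finset.mem_singleton] at h
  simp only [Finset.mem_univ, true_and] at h
  simp only [Finset.mem_filter, Finset.mem_univ, true_and]
  constructor
  · intro hm' heq
    exact (h.mpr (Fin.ext heq)) hm'
  · intro hne
    by_contra hnotmem
    exact hne (congrArg Fin.val (h.mp hnotmem))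

lemma fiber_filter_card {n : ℕ} (hn : 2 ≤ n) {m0 : ℕ} (hm0 : m0 ≤ n+1) :
    ((FacetsK n).filter (fun T => Finset.image (fmap n) T =
      Finset.univ.filter (fun m' : Fin (n+2) => (m':ℕ) ≠ m0))).card = n+1 := by
  classical
  by_cases hcase : m0 = n+1
  · subst hcase
    have heq : (FacetsK n).filter (fun T => Finset.image (fmap n) T =
        Finset.univ.filter (fun m' : Fin (n+2) => (m':ℕ) ≠ (n+1))) =
        (Finset.range (n+1)).image (Bf n) := by
      ext T
      rw [Finset.mem_filter]
      constructor
      · rintro ⟨hT, him⟩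
        rcases mem_FacetsK.mp hT with ⟨i, hi, rfl⟩ | ⟨i, hi, rfl⟩ | ⟨i, j, hi, hj, hij, rfl⟩
        · rw [image_Af (by omega)] at him
          have := val_missing_inj (by omega) (by omega) him
          omega
        · exact Finset.mem_image.mpr ⟨i, Finset.mem_range.mpr (by omega), rfl⟩
        · rw [image_Cf hi hj hij] at him
          have := val_missing_inj (by omega) (by omega) him
          omega
      · intro hT
        obtain ⟨i, hi, rfl⟩ := Finset.mem_image.mp hT
        rw [Finset.mem_range] at hi
        exact ⟨mem_FacetsK.mpr (Or.inr (Or.inl ⟨i, by omega, rfl⟩)), image_Bf (by omega)⟩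
    rw [heq, Finset.card_image_of_injOn, Finset.card_range]
    intro a ha b hb h
    simp only [Finset.coe_range, Set.mem_Iio] at ha hb
    exact Bf_inj (by omega) (by omega) h
  · have hm0n : m0 ≤ n := by omega
    have hnm : Af n m0 ∉ ((Finset.range (n+1)).erase m0).image (fun i => Cf n i m0) := by
      intro hmem
      obtain ⟨i, hi, he⟩ := Finset.mem_image.mp hmem
      exact Af_ne_Cf (by omega) he.symm
    have hinjOn : Set.InjOn (fun i => Cf n i m0) ↑((Finset.range (n+1)).erase m0) := by
      intro a ha b hb h
      rw [Finset.mem_coe, Finset.mem_erase, Finset.mem_range] at ha hb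
      exact (Cf_inj (by omega) hm0n ha.1 (by omega) hm0n hb.1 h).1
    have heq : (FacetsK n).filter (fun T => Finset.image (fmap n) T =
        Finset.univ.filter (fun m' : Fin (n+2) => (m':ℕ) ≠ m0)) =
        insert (Af n m0) (((Finset.range (n+1)).erase m0).image (fun i => Cf n i m0)) := by
      ext T
      rw [Finset.mem_filter, Finset.mem_insert]
      constructor
      · rintro ⟨hT, him⟩
        rcases mem_FacetsK.mp hT with ⟨i, hi, rfl⟩ | ⟨i, hi, rfl⟩ | ⟨i, j, hi, hj, hij, rfl⟩
        · rw [image_Af (by omega)] at him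
          have := val_missing_inj (by omega) (by omega) him
          left
          rw [this]
        · rw [image_Bf hi] at him
          have := val_missing_inj (by omega) (by omega) him
          omega
        · rw [image_Cf hi hj hij] at him
          have hjm := val_missing_inj (by omega) (by omega) him
          right
          exact Finset.mem_image.mpr ⟨i, Finset.mem_erase.mpr ⟨by omega,
            Finset.mem_range.mpr (by omega)⟩, by rw [hjm]⟩
      · rintro (rfl | hmem)
        · exact ⟨mem_FacetsK.mpr (Or.inl ⟨m0, hm0n, rfl⟩), image_Af (by omega)⟩
        · obtain ⟨i, hi, rfl⟩ := Finset.mem_image.mp hmem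
          rw [Finset.mem_erase, Finset.mem_range] at hi
          exact ⟨mem_FacetsK.mpr (Or.inr (Or.inr ⟨i, m0, by omega, hm0n, hi.1, rfl⟩)),
            image_Cf (by omega) hm0n hi.1⟩
    rw [heq, Finset.card_insert_of_notMem hnm, Finset.card_image_of_injOn hinjOn,
      Finset.card_erase_of_mem (Finset.mem_range.mpr (by omega)), Finset.card_range]
    omega

theorem hasDeg (n : ℕ) (hn : 2 ≤ n) :
    HasDegree (oK n hn) (oL n) (fmap n) ((n:ℤ)+1) := by
  classical
  intro y hy
  have hsigny : Int.sign (detL n y) = 1 := hy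
  have hdy : detL n y ≠ 0 := fun h => by
    rw [h, Int.sign_zero] at hsigny
    exact one_ne_zero hsigny.symm
  have hyinj : Function.Injective y := by
    by_contra h
    exact hdy (detL_not_inj n y h)
  obtain ⟨m0, hm0le, hform⟩ := missing_label' hyinj
  have h1 : algSum (oK n hn).sign (fmap n) y =
      ((Finset.univ.filter (fun x : Fin (n+1) → Fin (2*n+4) =>
        fmap n ∘ x = y ∧ Finset.image x Finset.univ ∈ (gen (FacetsK n)).faces)).card : ℤ) := by
    unfold AbsCx.algSum
    rw [← Finset.sum_boole]
    apply Finset.sum_congr rfl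
    intro x _
    by_cases hPx : fmap n ∘ x = y
    · rw [if_pos hPx]
      by_cases hQx : Finset.image x Finset.univ ∈ (gen (FacetsK n)).faces
      · rw [if_pos ⟨hPx, hQx⟩]
        show signK n x = 1
        unfold signK
        rw [if_pos hQx, hPx]
        exact hsigny
      · rw [if_neg (fun h => hQx h.2)]
        show signK n x = 0
        unfold signK
        rw [if_neg hQx]
    · rw [if_neg hPx, if_neg (fun h => hPx h.1)]
  have h2 : (Finset.univ.filter (fun x : Fin (n+1) → Fin (2*n+4) =>
        fmap n ∘ x = y ∧ Finset.image x Finset.univ ∈ (gen (FacetsK n)).faces)).card =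
      ((FacetsK n).filter (fun T => Finset.image (fmap n) T =
        Finset.image y Finset.univ)).card := by
    apply Finset.card_bij (fun x _ => Finset.image x Finset.univ)
    · intro x hx
      rw [Finset.mem_filter] at hx
      obtain ⟨_, hPx, hQx⟩ := hx
      have hyx : ∀ s, fmap n (x s) = y s := fun s => congrFun hPx s
      have hxinj : Function.Injective x := by
        intro a b hab
        apply hyinj
        rw [← hyx a, ← hyx b, hab]
      have hfacet : Finset.image x Finset.univ ∈ FacetsK n :=
        face_card_facet hQx (by rw [Finset.card_image_of_injective _ hxinj, Finset.card_univ,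
          Fintype.card_fin])
      rw [Finset.mem_filter]
      refine ⟨hfacet, ?_⟩
      rw [Finset.image_image, hPx]
    · intro x hx x' hx' him
      rw [Finset.mem_filter] at hx hx'
      funext s
      have hm1 : x s ∈ Finset.image x Finset.univ :=
        Finset.mem_image_of_mem _ (Finset.mem_univ s)
      have hm2 : x' s ∈ Finset.image x Finset.univ := by
        rw [him]
        exact Finset.mem_image_of_mem _ (Finset.mem_univ s)
      have hyx : ∀ s, fmap n (x s) = y s := fun s => congrFun hx.2.1 s
      have hyx' : ∀ s, fmap n (x' s) = y s := fun s => congrFun hx'.2.1 s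
      have hxinj : Function.Injective x := by
        intro a b hab
        apply hyinj
        rw [← hyx a, ← hyx b, hab]
      have hfacet : Finset.image x Finset.univ ∈ FacetsK n :=
        face_card_facet hx.2.2 (by rw [Finset.card_image_of_injective _ hxinj,
          Finset.card_univ, Fintype.card_fin])
      exact fmap_inj_facet hfacet hm1 hm2 (by rw [hyx s, hyx' s])
    · intro T hT
      rw [Finset.mem_filter] at hT
      obtain ⟨hTf, hTim⟩ := hT
      have hex : ∀ s : Fin (n+1), ∃ v, v ∈ T ∧ fmap n v = y s := by
        intro s
        have : y s ∈ Finset.image (fmap n) T := by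
          rw [hTim]
          exact Finset.mem_image_of_mem y (Finset.mem_univ s)
        obtain ⟨v, hv1, hv2⟩ := Finset.mem_image.mp this
        exact ⟨v, hv1, hv2⟩
      choose xf hxf1 hxf2 using hex
      have hP : fmap n ∘ xf = y := funext hxf2
      have hxinj : Function.Injective xf := by
        intro a b hab
        apply hyinj
        rw [← hxf2 a, ← hxf2 b, hab]
      have hsub : Finset.image xf Finset.univ ⊆ T := by
        intro w hw
        obtain ⟨s, _, rfl⟩ := Finset.mem_image.mp hw
        exact hxf1 s
      have heq : Finset.image xf Finset.univ = T :=
        Finset.eq_of_subset_of_card_le hsub (by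
          rw [card_mem_FacetsK hTf, Finset.card_image_of_injective _ hxinj,
            Finset.card_univ, Fintype.card_fin])
      refine ⟨xf, ?_, heq⟩
      rw [Finset.mem_filter]
      refine ⟨Finset.mem_univ _, hP, ?_⟩
      rw [heq]
      exact ⟨Finset.card_pos.mp (by rw [card_mem_FacetsK hTf]; omega), T, hTf, subset_rfl⟩
  rw [h1, h2, hform, fiber_filter_card hn hm0le]
  push_cast
  ring

end Stmt11Aux


open Finset AbsCx

namespace Stmt11Aux

lemma vertex_cover {n : ℕ} (hn : 2 ≤ n) (v : Fin (2*n+4)) : ∃ T ∈ FacetsK n, v ∈ T := by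
  by_cases h1 : (v:ℕ) < n+2
  · refine ⟨Af n (if (v:ℕ) = 0 then 1 else 0),
      mem_FacetsK.mpr (Or.inl ⟨_, by split <;> omega, rfl⟩), ?_⟩
    rw [mem_Af]
    split <;> omega
  · by_cases h2 : (v:ℕ) = 2*n+3
    · refine ⟨Cf n 0 1,
        mem_FacetsK.mpr (Or.inr (Or.inr ⟨0, 1, by omega, by omega, by omega, rfl⟩)), ?_⟩
      rw [mem_Cf]
      omega
    · refine ⟨Bf n ((v:ℕ) - (n+2)),
        mem_FacetsK.mpr (Or.inr (Or.inl ⟨_, by have := v.isLt; omega, rfl⟩)), ?_⟩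
      rw [mem_Bf]
      have := v.isLt
      omega

lemma vertexSet_K (n : ℕ) (hn : 2 ≤ n) : (gen (FacetsK n)).vertexSet = Set.univ := by
  ext v
  simp only [vertexSet, Set.mem_setOf_eq, Set.mem_univ, iff_true]
  obtain ⟨T, hT, hv⟩ := vertex_cover hn v
  exact ⟨Finset.singleton_nonempty v, T, hT, Finset.singleton_subset_iff.mpr hv⟩

lemma facetsOfDim_K (n : ℕ) : (gen (FacetsK n)).facetsOfDim n = ↑(FacetsK n) := by
  ext s
  simp only [facetsOfDim, Set.mem_setOf_eq, Finset.mem_coe]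
  constructor
  · rintro ⟨hface, hcard⟩
    exact face_card_facet hface hcard
  · intro hs
    exact ⟨⟨Finset.card_pos.mp (by rw [card_mem_FacetsK hs]; omega), s, hs, subset_rfl⟩,
      card_mem_FacetsK hs⟩

lemma simplicialK (n : ℕ) (hn : 2 ≤ n) :
    (gen (FacetsK n)).IsSimplicialMap (stdSphere n) (fmap n) := by
  rintro s ⟨hne, T, hT, hsub⟩
  refine ⟨hne.image _, ?_⟩
  intro huniv
  have hsubim : Finset.image (fmap n) s ⊆ Finset.image (fmap n) T :=
    Finset.image_subset_image hsub
  rcases mem_FacetsK.mp hT with ⟨i, hi, rfl⟩ | ⟨i, hi, rfl⟩ | ⟨i, j, hi, hj, hij, rfl⟩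
  · have hmem : (⟨i, by omega⟩ : Fin (n+2)) ∈ Finset.image (fmap n) s := by
      rw [huniv]; exact Finset.mem_univ _
    have h2 := hsubim hmem
    rw [image_Af (by omega)] at h2
    simp only [Finset.mem_filter, Finset.mem_univ, true_and] at h2
    exact h2 rfl
  · have hmem : (⟨n+1, by omega⟩ : Fin (n+2)) ∈ Finset.image (fmap n) s := by
      rw [huniv]; exact Finset.mem_univ _
    have h2 := hsubim hmem
    rw [image_Bf hi] at h2
    simp only [Finset.mem_filter, Finset.mem_univ, true_and] at h2
    exact h2 rfl
  · have hmem : (⟨j, by omega⟩ : Fin (n+2)) ∈ Finset.image (fmap n) s := by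
      rw [huniv]; exact Finset.mem_univ _
    have h2 := hsubim hmem
    rw [image_Cf hi hj hij] at h2
    simp only [Finset.mem_filter, Finset.mem_univ, true_and] at h2
    exact h2 rfl

lemma sphereTriK (n : ℕ) : (gen (FacetsK n)).IsSphereTriangulation n := by
  obtain ⟨e1⟩ := real_FacetsK_homeo_SphFam n
  obtain ⟨e2⟩ := real_SphFam_homeo_sphere n
  exact ⟨e1.trans e2⟩

end Stmt11Aux

open Stmt11Aux in
/-- For every `n ≥ 2` there is a triangulated `n`-sphere with `2n + 4` vertices and
exactly `(n+1)(n+2)` facets admitting a simplicial degree `n+1` map to `S^n_{n+2}`. -/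
theorem stmt11 (n : ℕ) (hn : 2 ≤ n) :
    ∃ K : AbsCx (Fin (2 * n + 4)),
      K.vertexSet = Set.univ ∧ K.IsSphereTriangulation n ∧
      Set.ncard (K.facetsOfDim n) = (n + 1) * (n + 2) ∧
      ∃ (oK : CoherentOrientation n K) (oL : CoherentOrientation n (stdSphere n))
        (f : Fin (2 * n + 4) → Fin (n + 2)),
        K.IsSimplicialMap (stdSphere n) f ∧ HasDegree oK oL f ((n : ℤ) + 1) := by
  refine ⟨gen (FacetsK n), vertexSet_K n hn, sphereTriK n, ?_,
    Stmt11Aux.oK n hn, Stmt11Aux.oL n, fmap n, simplicialK n hn, hasDeg n hn⟩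
  rw [facetsOfDim_K n, Set.ncard_coe_finset, card_FacetsK n]
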